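/- arXiv:math/9808049 — 4 statements merged into one kernel-verified Lean document; each statement's English description precedes it below -/
import Mathlib

section
/- If U_1 ~ Geometric(p) and S_0 = r is fixed, then for every z > 0, E[z^Y / (q + pz)^M] = 1, where Y is the total yield and M the total marketing effort. -/
open MeasureTheory ProbabilityTheory
open scoped ENNReal NNReal
namespace OSAux
variable {r : ℕ}
noncomputable def sig (p q : ℝ) (r k : ℕ) : ℝ :=
  if k ≤ r + 1 then p * q ^ (k - 1) else q ^ (r + 1)
noncomputable def Tf (w : Fin r → ℕ) : ℕ := sInf {n | 1 ≤ n ∧ ∀ s, w s ≠ n}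
def cc (w : Fin r → ℕ) (t : ℕ) : ℕ := (Finset.univ.filter fun s => w s ≤ t).card
def dd (w : Fin r → ℕ) (t : ℕ) : ℕ := ∑ s, min (w s) t
noncomputable def gg (p q z : ℝ) (w : Fin r → ℕ) (t : ℕ) : ℝ :=
  z ^ cc w t / (q + p * z) ^ dd w t
def PP (r : ℕ) : Finset (Fin r → ℕ) := Fintype.piFinset fun _ => Finset.Icc 1 (r + 2)

lemma prod_form (p q z : ℝ) (w : Fin r → ℕ) (t : ℕ) :
    (∏ s, sig p q r (w s)) * gg p q z w t
      = ∏ s, (sig p q r (w s) * z ^ (if w s ≤ t then 1 else 0) *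
          ((q + p * z) ^ min (w s) t)⁻¹) := by
  symm
  rw [Finset.prod_mul_distrib, Finset.prod_mul_distrib, Finset.prod_inv_distrib,
    Finset.prod_pow_eq_pow_sum, Finset.prod_pow_eq_pow_sum, gg, cc,
    Finset.card_filter, dd]
  ring

lemma pigeon {m : ℕ} (w : Fin r → ℕ) (hm : r < m) :
    ∃ n, 1 ≤ n ∧ n ≤ m ∧ ∀ s, w s ≠ n := by
  by_contra h
  push_neg at h
  have hsub : Finset.Icc 1 m ⊆ Finset.image w Finset.univ := by
    intro n hn
    simp only [Finset.mem_Icc] at hn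
    obtain ⟨s, hs⟩ := h n hn.1 hn.2
    exact Finset.mem_image.2 ⟨s, Finset.mem_univ s, hs⟩
  have h1 := Finset.card_le_card hsub
  have h2 := Finset.card_image_le (s := (Finset.univ : Finset (Fin r))) (f := w)
  simp [Nat.card_Icc] at h1 h2
  omega

lemma Tf_mem (w : Fin r → ℕ) : 1 ≤ Tf w ∧ ∀ s, w s ≠ Tf w := by
  obtain ⟨n, h1, _, h3⟩ := pigeon w (Nat.lt_succ_self r)
  have hne : {n | 1 ≤ n ∧ ∀ s, w s ≠ n}.Nonempty := ⟨n, h1, h3⟩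
  exact Nat.sInf_mem hne

lemma Tf_le (w : Fin r → ℕ) : Tf w ≤ r + 1 := by
  obtain ⟨n, h1, h2, h3⟩ := pigeon w (Nat.lt_succ_self r)
  exact le_trans (Nat.sInf_le ⟨h1, h3⟩) h2

lemma sum_sig_Icc_one (p q : ℝ) (hq : q = 1 - p) :
    ∀ j, j ≤ r + 1 → ∑ k ∈ Finset.Icc 1 j, sig p q r k = 1 - q ^ j := by
  intro j
  induction j with
  | zero => simp
  | succ j ih =>
    intro hj
    rw [Finset.sum_Icc_succ_top (by omega : 1 ≤ j + 1), ih (by omega)]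
    have : sig p q r (j + 1) = p * q ^ j := by
      rw [sig, if_pos (by omega)]; norm_num
    rw [this, hq]; ring

lemma sum_sig_tail (p q : ℝ) (hq : q = 1 - p) :
    ∀ j, 1 ≤ j → j ≤ r + 2 → ∑ k ∈ Finset.Icc j (r + 2), sig p q r k = q ^ (j - 1) := by
  have htot : ∑ k ∈ Finset.Icc 1 (r + 2), sig p q r k = 1 := by
    rw [Finset.sum_Icc_succ_top (by omega : 1 ≤ r + 2),
      sum_sig_Icc_one p q hq (r + 1) le_rfl]
    have : sig p q r (r + 2) = q ^ (r + 1) := by rw [sig, if_neg (by omega)]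
    rw [this]; ring
  intro j h1 h2
  have hsplit := Finset.sum_Ico_consecutive (f := sig p q r)
    (by omega : 1 ≤ j) (by omega : j ≤ r + 3)
  have e1 : Finset.Ico 1 (r + 3) = Finset.Icc 1 (r + 2) := by
    ext x; simp only [Finset.mem_Ico, Finset.mem_Icc]; omega
  have e2 : Finset.Ico j (r + 3) = Finset.Icc j (r + 2) := by
    ext x; simp only [Finset.mem_Ico, Finset.mem_Icc]; omega
  have e3 : Finset.Ico 1 j = Finset.Icc 1 (j - 1) := by
    ext x; simp only [Finset.mem_Ico, Finset.mem_Icc]; omega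
  rw [e1, e2, e3] at hsplit
  have hpre := sum_sig_Icc_one (r := r) p q hq (j - 1) (by omega)
  rw [hpre, htot] at hsplit
  linarith

lemma step (p : ℝ) (hp0 : 0 < p) (hp1 : p < 1) (q : ℝ) (hq : q = 1 - p)
    (z : ℝ) (hz : 0 < z) (m : ℕ) :
    ∑ w ∈ PP r, (∏ s, sig p q r (w s)) * gg p q z w (min (Tf w) (m + 1))
      = ∑ w ∈ PP r, (∏ s, sig p q r (w s)) * gg p q z w (min (Tf w) m) := by
  classical
  have hq0 : 0 < q := by rw [hq]; linarith
  have hQ : 0 < q + p * z := by nlinarith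
  rw [← Finset.sum_filter_add_sum_filter_not (PP r) (fun w => Tf w ≤ m)
      (fun w => (∏ s, sig p q r (w s)) * gg p q z w (min (Tf w) (m + 1))),
    ← Finset.sum_filter_add_sum_filter_not (PP r) (fun w => Tf w ≤ m)
      (fun w => (∏ s, sig p q r (w s)) * gg p q z w (min (Tf w) m))]
  congr 1
  · refine Finset.sum_congr rfl fun w hw => ?_
    rw [Finset.mem_filter] at hw
    rw [min_eq_left (by omega), min_eq_left hw.2]
  have eL : ∑ w ∈ (PP r).filter (fun w => ¬ Tf w ≤ m),
      (∏ s, sig p q r (w s)) * gg p q z w (min (Tf w) (m + 1))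
      = ∑ w ∈ (PP r).filter (fun w => ¬ Tf w ≤ m),
      (∏ s, sig p q r (w s)) * gg p q z w (m + 1) := by
    refine Finset.sum_congr rfl fun w hw => ?_
    rw [Finset.mem_filter] at hw
    rw [min_eq_right (by omega)]
  have eR : ∑ w ∈ (PP r).filter (fun w => ¬ Tf w ≤ m),
      (∏ s, sig p q r (w s)) * gg p q z w (min (Tf w) m)
      = ∑ w ∈ (PP r).filter (fun w => ¬ Tf w ≤ m),
      (∏ s, sig p q r (w s)) * gg p q z w m := by
    refine Finset.sum_congr rfl fun w hw => ?_
    rw [Finset.mem_filter] at hw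
    rw [min_eq_right (by omega)]
  rw [eL, eR]
  have hmaps : ∀ w ∈ (PP r).filter (fun w => ¬ Tf w ≤ m),
      (fun s => min (w s) (m + 1)) ∈
        Fintype.piFinset (fun _ : Fin r => Finset.Icc 1 (m + 1)) := by
    intro w hw
    rw [Finset.mem_filter] at hw
    have hwP := hw.1
    rw [PP, Fintype.mem_piFinset] at hwP
    rw [Fintype.mem_piFinset]
    intro s
    have := hwP s
    simp only [Finset.mem_Icc] at this ⊢
    omega
  rw [← Finset.sum_fiberwise_of_maps_to hmaps
      (fun w => (∏ s, sig p q r (w s)) * gg p q z w (m + 1)),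
    ← Finset.sum_fiberwise_of_maps_to hmaps
      (fun w => (∏ s, sig p q r (w s)) * gg p q z w m)]
  refine Finset.sum_congr rfl fun v hv => ?_
  by_cases hcond : ∃ n, 1 ≤ n ∧ n ≤ m ∧ ∀ s, v s ≠ n
  · have hemp : ((PP r).filter (fun w => ¬ Tf w ≤ m)).filter
        (fun w => (fun s => min (w s) (m + 1)) = v) = ∅ := by
      rw [Finset.filter_eq_empty_iff]
      intro w hw hwv
      rw [Finset.mem_filter] at hw
      obtain ⟨n, hn1, hn2, hn3⟩ := hcond
      have hwn : ∀ s, w s ≠ n := by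
        intro s hws
        have hc := congrFun hwv s
        exact hn3 s (by omega)
      exact hw.2 (le_trans (Nat.sInf_le ⟨hn1, hwn⟩) hn2)
    rw [hemp]
    simp
  · push_neg at hcond
    have hv' : ∀ s, 1 ≤ v s ∧ v s ≤ m + 1 := by
      rw [Fintype.mem_piFinset] at hv
      intro s; have := hv s; simpa [Finset.mem_Icc] using this
    have hmr : m ≤ r := by
      by_contra hmr
      obtain ⟨n, h1, h2, h3⟩ := pigeon v (by omega : r < m)
      obtain ⟨s, hs⟩ := hcond n h1 h2
      exact h3 s hs
    have hfib : ((PP r).filter (fun w => ¬ Tf w ≤ m)).filter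
        (fun w => (fun s => min (w s) (m + 1)) = v)
        = Fintype.piFinset (fun s => if v s ≤ m then ({v s} : Finset ℕ)
            else Finset.Icc (m + 1) (r + 2)) := by
      ext w
      simp only [Finset.mem_filter, Fintype.mem_piFinset, PP, Finset.mem_Icc]
      constructor
      · rintro ⟨⟨hwP, _⟩, hwv⟩ s
        have hc := congrFun hwv s
        have h1 := hwP s
        have h2 := (hv' s)
        by_cases hvs : v s ≤ m
        · rw [if_pos hvs]; simp only [Finset.mem_singleton]; omega
        · rw [if_neg hvs]; simp only [Finset.mem_Icc]; omega
      · intro h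
        have hco : ∀ s, (v s ≤ m → w s = v s) ∧ (¬ v s ≤ m → m + 1 ≤ w s ∧ w s ≤ r + 2) := by
          intro s
          have := h s
          constructor
          · intro hvs; rw [if_pos hvs] at this; simpa using this
          · intro hvs; rw [if_neg hvs] at this; simpa using this
        refine ⟨⟨fun s => ?_, fun hTm => ?_⟩, funext fun s => ?_⟩
        · have h1 := (hco s).1; have h2 := (hco s).2; have h3 := hv' s
          by_cases hvs : v s ≤ m
          · have := h1 hvs; omega
          · have := h2 hvs; omega
        · have hTf := Tf_mem w
          obtain ⟨s, hs⟩ := hcond (Tf w) hTf.1 hTm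
          have := (hco s).1 (by omega)
          exact hTf.2 s (by omega)
        · have h1 := (hco s).1; have h2 := (hco s).2; have h3 := hv' s
          by_cases hvs : v s ≤ m
          · have := h1 hvs; omega
          · have := h2 hvs; omega
    rw [hfib]
    have hL : ∑ w ∈ Fintype.piFinset (fun s => if v s ≤ m then ({v s} : Finset ℕ)
            else Finset.Icc (m + 1) (r + 2)),
        (∏ s, sig p q r (w s)) * gg p q z w (m + 1)
        = ∏ s, ∑ k ∈ (if v s ≤ m then ({v s} : Finset ℕ) else Finset.Icc (m + 1) (r + 2)),
            (sig p q r k * z ^ (if k ≤ m + 1 then 1 else 0) *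
              ((q + p * z) ^ min k (m + 1))⁻¹) := by
      rw [Finset.prod_univ_sum]
      exact Finset.sum_congr rfl fun w _ => prod_form p q z w (m + 1)
    have hR : ∑ w ∈ Fintype.piFinset (fun s => if v s ≤ m then ({v s} : Finset ℕ)
            else Finset.Icc (m + 1) (r + 2)),
        (∏ s, sig p q r (w s)) * gg p q z w m
        = ∏ s, ∑ k ∈ (if v s ≤ m then ({v s} : Finset ℕ) else Finset.Icc (m + 1) (r + 2)),
            (sig p q r k * z ^ (if k ≤ m then 1 else 0) *
              ((q + p * z) ^ min k m)⁻¹) := by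
      rw [Finset.prod_univ_sum]
      exact Finset.sum_congr rfl fun w _ => prod_form p q z w m
    rw [hL, hR]
    refine Finset.prod_congr rfl fun s _ => ?_
    by_cases hvs : v s ≤ m
    · rw [if_pos hvs]
      simp only [Finset.sum_singleton]
      rw [if_pos (by omega : v s ≤ m + 1), if_pos hvs,
        min_eq_left (by omega), min_eq_left hvs]
    · have hRside : ∑ k ∈ Finset.Icc (m + 1) (r + 2),
          (sig p q r k * z ^ (if k ≤ m then 1 else 0) * ((q + p * z) ^ min k m)⁻¹)
          = q ^ m * ((q + p * z) ^ m)⁻¹ := by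
        have : ∀ k ∈ Finset.Icc (m + 1) (r + 2),
            sig p q r k * z ^ (if k ≤ m then 1 else 0) * ((q + p * z) ^ min k m)⁻¹
            = sig p q r k * ((q + p * z) ^ m)⁻¹ := by
          intro k hk
          rw [Finset.mem_Icc] at hk
          rw [if_neg (by omega), min_eq_right (by omega)]
          ring
        rw [Finset.sum_congr rfl this, ← Finset.sum_mul,
          sum_sig_tail p q hq (m + 1) (by omega) (by omega)]
        norm_num
      have hsplit : Finset.Icc (m + 1) (r + 2) = insert (m + 1) (Finset.Icc (m + 2) (r + 2)) := by
        ext x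
        simp only [Finset.mem_Icc, Finset.mem_insert]
        omega
      have hLside : ∑ k ∈ Finset.Icc (m + 1) (r + 2),
          (sig p q r k * z ^ (if k ≤ m + 1 then 1 else 0) * ((q + p * z) ^ min k (m + 1))⁻¹)
          = (p * q ^ m * z + q ^ (m + 1)) * ((q + p * z) ^ (m + 1))⁻¹ := by
        rw [hsplit, Finset.sum_insert (by simp)]
        have e1 : sig p q r (m + 1) * z ^ (if m + 1 ≤ m + 1 then 1 else 0) *
            ((q + p * z) ^ min (m + 1) (m + 1))⁻¹
            = p * q ^ m * z * ((q + p * z) ^ (m + 1))⁻¹ := by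
          rw [if_pos le_rfl, min_self, sig, if_pos (by omega)]
          norm_num
        have e2 : ∑ k ∈ Finset.Icc (m + 2) (r + 2),
            (sig p q r k * z ^ (if k ≤ m + 1 then 1 else 0) * ((q + p * z) ^ min k (m + 1))⁻¹)
            = q ^ (m + 1) * ((q + p * z) ^ (m + 1))⁻¹ := by
          have : ∀ k ∈ Finset.Icc (m + 2) (r + 2),
              sig p q r k * z ^ (if k ≤ m + 1 then 1 else 0) * ((q + p * z) ^ min k (m + 1))⁻¹
              = sig p q r k * ((q + p * z) ^ (m + 1))⁻¹ := by
            intro k hk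
            rw [Finset.mem_Icc] at hk
            rw [if_neg (by omega), min_eq_right (by omega)]
            ring
          rw [Finset.sum_congr rfl this, ← Finset.sum_mul,
            sum_sig_tail p q hq (m + 2) (by omega) (by omega)]
          norm_num
        rw [e1, e2]; ring
      rw [if_neg hvs, hLside, hRside]
      have : p * q ^ m * z + q ^ (m + 1) = q ^ m * (q + p * z) := by ring
      rw [this, pow_succ]
      field_simp

lemma key (p : ℝ) (hp0 : 0 < p) (hp1 : p < 1) (q : ℝ) (hq : q = 1 - p)
    (z : ℝ) (hz : 0 < z) :
    ∑ w ∈ PP r, (∏ s, sig p q r (w s)) * gg p q z w (Tf w) = 1 := by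
  have hG : ∀ m, ∑ w ∈ PP r, (∏ s, sig p q r (w s)) * gg p q z w (min (Tf w) m) = 1 := by
    intro m
    induction m with
    | zero =>
      have h0 : ∀ w ∈ PP r, (∏ s, sig p q r (w s)) * gg p q z w (min (Tf w) 0)
          = ∏ s, sig p q r (w s) := by
        intro w hw
        rw [PP, Fintype.mem_piFinset] at hw
        have hcc : cc w 0 = 0 := by
          rw [cc, Finset.card_eq_zero, Finset.filter_eq_empty_iff]
          intro s _
          have := hw s; rw [Finset.mem_Icc] at this; omega
        have hdd : dd w 0 = 0 := by rw [dd]; simp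
        rw [min_eq_right (Nat.zero_le _), gg, hcc, hdd]
        norm_num
      rw [Finset.sum_congr rfl h0, PP, ← Finset.prod_univ_sum]
      have : ∑ k ∈ Finset.Icc 1 (r + 2), sig p q r k = 1 := by
        have := sum_sig_tail (r := r) p q hq 1 le_rfl (by omega)
        simpa using this
      rw [Finset.prod_congr rfl fun s _ => this]
      simp
    | succ m ih => rw [step p hp0 hp1 q hq z hz m, ih]
  have hfin := hG (r + 1)
  rw [← hfin]
  exact Finset.sum_congr rfl fun w _ => by rw [min_eq_left (Tf_le w)]

end OSAux

/-- **Martingale identity.** With `r` clients whose response times `U 0, …, U (r-1)` are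
i.i.d. `Geometric(p)` (`P(U s = n) = p q^{n-1}`, `n ≥ 1`, `q = 1 - p`),
`X n = #{s < r : U s = n}`, `T = min {n ≥ 1 : X n = 0}`, `Y = X 1 + ⋯ + X (T-1)` the
total yield and `M = ∑_{s < r} (U s ∧ T)` the total marketing effort:
for every `z > 0`, `E[z^Y / (q + p z)^M] = 1`. -/
theorem optional_stopping_identity
    {Ω : Type*} [MeasurableSpace Ω] (μ : Measure Ω) [IsProbabilityMeasure μ]
    (p : ℝ) (hp : 0 < p ∧ p < 1) (q : ℝ) (hq : q = 1 - p)
    (r : ℕ)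
    (U : ℕ → Ω → ℕ) (hUm : ∀ s, Measurable (U s))
    (hindep : iIndepFun U μ)
    (hU : ∀ s, ∀ n, 1 ≤ n → μ {ω | U s ω = n} = ENNReal.ofReal (p * q ^ (n - 1)))
    (hU0 : ∀ s, μ {ω | U s ω = 0} = 0)
    (X : ℕ → Ω → ℕ)
    (hX : ∀ n ω, X n ω = ((Finset.range r).filter (fun s => U s ω = n)).card)
    (T : Ω → ℕ) (hT : ∀ ω, T ω = sInf {n | 1 ≤ n ∧ X n ω = 0})
    (Y : Ω → ℕ) (hY : ∀ ω, Y ω = ∑ n ∈ Finset.Ico 1 (T ω), X n ω)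
    (M : Ω → ℕ)
    (hM : ∀ ω, M ω = ∑ s ∈ Finset.range r,
        (if 1 ≤ U s ω ∧ U s ω < T ω then U s ω else T ω))
    (z : ℝ) (hz : 0 < z) :
    ∫ ω, z ^ (Y ω) / (q + p * z) ^ (M ω) ∂μ = 1 := by
  classical
  obtain ⟨hp0, hp1⟩ := hp
  have hq0 : 0 < q := by rw [hq]; linarith
  have hq1 : q ≤ 1 := by rw [hq]; linarith
  have hsig_nonneg : ∀ k, 0 ≤ OSAux.sig p q r k := by
    intro k; rw [OSAux.sig]; split_ifs <;> positivity
  set W : Ω → (Fin r → ℕ) := fun ω s => min (U s ω) (r + 2) with hWdef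
  have hWmeas : ∀ w : Fin r → ℕ, MeasurableSet {ω | W ω = w} := by
    intro w
    have he : {ω | W ω = w} = ⋂ s : Fin r, (fun ω => min (U (s : ℕ) ω) (r + 2)) ⁻¹' {w s} := by
      ext ω
      simp only [hWdef, Set.mem_setOf_eq, funext_iff, Set.mem_iInter, Set.mem_preimage,
        Set.mem_singleton_iff]
    rw [he]
    exact MeasurableSet.iInter fun s =>
      ((hUm (s : ℕ)).min measurable_const) (measurableSet_singleton (w s))
  have hae : ∀ᵐ ω ∂μ, ∀ s : Fin r, 1 ≤ U (s : ℕ) ω := by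
    rw [ae_all_iff]
    intro s
    rw [ae_iff]
    have e : {ω | ¬ 1 ≤ U (s : ℕ) ω} = {ω | U (s : ℕ) ω = 0} := by
      ext ω; simp [Nat.not_le, Nat.lt_one_iff]
    rw [e]
    exact hU0 (s : ℕ)
  -- pointwise identification
  have hpt : ∀ ω, (∀ s : Fin r, 1 ≤ U (s : ℕ) ω) → W ω ∈ OSAux.PP r ∧
      z ^ Y ω / (q + p * z) ^ M ω = OSAux.gg p q z (W ω) (OSAux.Tf (W ω)) := by
    intro ω hall
    have hwval : ∀ s : Fin r, W ω s = min (U (s : ℕ) ω) (r + 2) := fun s => rfl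
    have hwP : W ω ∈ OSAux.PP r := by
      rw [OSAux.PP, Fintype.mem_piFinset]
      intro s; rw [Finset.mem_Icc, hwval s]
      have := hall s; omega
    have hX0iff : ∀ n, X n ω = 0 ↔ ∀ s, s < r → U s ω ≠ n := by
      intro n
      rw [hX n ω, Finset.card_eq_zero, Finset.filter_eq_empty_iff]
      constructor
      · intro h s hs; exact h (Finset.mem_range.2 hs)
      · intro h s hs; exact h s (Finset.mem_range.1 hs)
    have hTfmem := OSAux.Tf_mem (W ω)
    have hTfle := OSAux.Tf_le (W ω)
    have hTfX : X (OSAux.Tf (W ω)) ω = 0 := by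
      rw [hX0iff]
      intro s hs hUs
      have h2 : min (U s ω) (r + 2) ≠ OSAux.Tf (W ω) := hTfmem.2 ⟨s, hs⟩
      omega
    have hTne : {n | 1 ≤ n ∧ X n ω = 0}.Nonempty := ⟨OSAux.Tf (W ω), hTfmem.1, hTfX⟩
    have hTmem : 1 ≤ T ω ∧ X (T ω) ω = 0 := by rw [hT ω]; exact Nat.sInf_mem hTne
    have hTle : T ω ≤ OSAux.Tf (W ω) := by
      rw [hT ω]; exact Nat.sInf_le ⟨hTfmem.1, hTfX⟩
    have hTr : T ω ≤ r + 1 := le_trans hTle hTfle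
    have hTT : T ω = OSAux.Tf (W ω) := by
      refine le_antisymm hTle (Nat.sInf_le ⟨hTmem.1, fun s => ?_⟩)
      rw [hwval s]
      have hU' := (hX0iff (T ω)).1 hTmem.2 (s : ℕ) s.isLt
      omega
    have hYc : Y ω = OSAux.cc (W ω) (OSAux.Tf (W ω)) := by
      rw [hY ω]
      have e1 : ∀ n ∈ Finset.Ico 1 (T ω), X n ω
          = ∑ s ∈ Finset.range r, if U s ω = n then 1 else 0 := by
        intro n _; rw [hX n ω, Finset.card_filter]
      rw [Finset.sum_congr rfl e1, Finset.sum_comm]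
      have e2 : ∀ s ∈ Finset.range r,
          (∑ n ∈ Finset.Ico 1 (T ω), if U s ω = n then 1 else 0)
          = if min (U s ω) (r + 2) ≤ OSAux.Tf (W ω) then 1 else 0 := by
        intro s hs
        rw [Finset.sum_ite_eq (Finset.Ico 1 (T ω)) (U s ω) (fun _ => 1)]
        rw [Finset.mem_range] at hs
        have h1 : 1 ≤ U s ω := hall ⟨s, hs⟩
        have h2 := (hX0iff (T ω)).1 hTmem.2 s hs
        rw [← hTT]
        simp only [Finset.mem_Ico]
        split_ifs <;> omega
      rw [Finset.sum_congr rfl e2, OSAux.cc, Finset.card_filter,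
        ← Fin.sum_univ_eq_sum_range (fun s => if min (U s ω) (r + 2) ≤ OSAux.Tf (W ω)
          then 1 else 0) r]
    have hMd : M ω = OSAux.dd (W ω) (OSAux.Tf (W ω)) := by
      rw [hM ω, OSAux.dd,
        ← Fin.sum_univ_eq_sum_range (fun s => if 1 ≤ U s ω ∧ U s ω < T ω then U s ω else T ω) r]
      refine Finset.sum_congr rfl fun s _ => ?_
      have h1 := hall s
      have h2 := (hX0iff (T ω)).1 hTmem.2 (s : ℕ) s.isLt
      rw [hwval s, ← hTT]
      split_ifs <;> omega
    exact ⟨hwP, by rw [hYc, hMd, OSAux.gg]⟩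
  -- per-client tail probabilities
  have hUle : ∀ s : ℕ, μ {ω | U s ω ≤ r + 1} = ENNReal.ofReal (1 - q ^ (r + 1)) := by
    intro s
    have hdecomp : {ω | U s ω ≤ r + 1} = ⋃ k ∈ Finset.range (r + 2), {ω | U s ω = k} := by
      ext ω
      simp only [Set.mem_setOf_eq, Set.mem_iUnion, Finset.mem_range, exists_prop]
      constructor
      · intro h; exact ⟨U s ω, by omega, rfl⟩
      · rintro ⟨k, hk, he⟩; omega
    rw [hdecomp, measure_biUnion_finset ?hd ?hm]
    case hd =>
      intro i _ j _ hij
      refine Set.disjoint_left.2 fun ω h1 h2 => hij ?_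
      simp only [Set.mem_setOf_eq] at h1 h2; omega
    case hm =>
      intro k _
      exact (hUm s) (measurableSet_singleton k)
    have hsplit := Finset.sum_Ico_consecutive (f := fun k => μ {ω | U s ω = k})
      (by omega : (0:ℕ) ≤ 1) (by omega : 1 ≤ r + 2)
    rw [← Nat.Ico_zero_eq_range, ← hsplit]
    have e0 : ∑ k ∈ Finset.Ico 0 1, μ {ω | U s ω = k} = 0 := by
      simp [hU0 s]
    rw [e0, zero_add]
    have e1 : ∀ k ∈ Finset.Ico 1 (r + 2), μ {ω | U s ω = k}
        = ENNReal.ofReal (OSAux.sig p q r k) := by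
      intro k hk
      rw [Finset.mem_Ico] at hk
      rw [hU s k hk.1, OSAux.sig, if_pos (by omega)]
    rw [Finset.sum_congr rfl e1, ← ENNReal.ofReal_sum_of_nonneg (fun k _ => hsig_nonneg k)]
    congr 1
    have e2 : Finset.Ico 1 (r + 2) = Finset.Icc 1 (r + 1) := by
      ext x; simp only [Finset.mem_Ico, Finset.mem_Icc]; omega
    rw [e2]
    exact OSAux.sum_sig_Icc_one (r := r) p q hq (r + 1) le_rfl
  have hqpow : 0 ≤ 1 - q ^ (r + 1) := by
    have : q ^ (r + 1) ≤ 1 := pow_le_one₀ (le_of_lt hq0) hq1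
    linarith
  have htail : ∀ s : ℕ, μ {ω | r + 2 ≤ U s ω} = ENNReal.ofReal (q ^ (r + 1)) := by
    intro s
    have hc : {ω | r + 2 ≤ U s ω} = {ω | U s ω ≤ r + 1}ᶜ := by
      ext ω; simp only [Set.mem_setOf_eq, Set.mem_compl_iff]; omega
    have hmeas : MeasurableSet {ω | U s ω ≤ r + 1} := (hUm s) measurableSet_Iic
    rw [hc, measure_compl hmeas (measure_ne_top μ _), hUle s, measure_univ,
      ← ENNReal.ofReal_one, ← ENNReal.ofReal_sub _ hqpow]
    congr 1; ring
  -- fiber probabilities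
  have hμW : ∀ w ∈ OSAux.PP r,
      μ {ω | W ω = w} = ENNReal.ofReal (∏ s, OSAux.sig p q r (w s)) := by
    intro w hw
    rw [OSAux.PP, Fintype.mem_piFinset] at hw
    set we : ℕ → ℕ := fun s => if h : s < r then w ⟨s, h⟩ else 1 with hwe
    have hwe' : ∀ s : Fin r, we (s : ℕ) = w s := by
      intro s; rw [hwe]; simp only [s.isLt, dif_pos, Fin.eta]
    set Es : ℕ → Set ℕ := fun s => if we s ≤ r + 1 then {we s} else Set.Ici (r + 2) with hEs
    have hmeasEs : ∀ i, i ∈ Finset.range r → MeasurableSet (Es i) := by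
      intro i _
      simp only [hEs]
      split_ifs
      exacts [measurableSet_singleton _, measurableSet_Ici]
    have hset : {ω | W ω = w} = ⋂ s ∈ Finset.range r, (U s) ⁻¹' (Es s) := by
      ext ω
      simp only [Set.mem_setOf_eq, Set.mem_iInter, Set.mem_preimage, funext_iff, hWdef]
      constructor
      · intro h s hs
        rw [Finset.mem_range] at hs
        have h1 : min (U s ω) (r + 2) = w ⟨s, hs⟩ := h ⟨s, hs⟩
        have hw' := hw ⟨s, hs⟩; rw [Finset.mem_Icc] at hw'
        have hwe'' : we s = w ⟨s, hs⟩ := hwe' ⟨s, hs⟩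
        rw [hEs]
        simp only
        split_ifs with hle
        · simp only [Set.mem_singleton_iff]; omega
        · simp only [Set.mem_Ici]; omega
      · intro h s
        have hs := Finset.mem_range.2 s.isLt
        have h1 := h (s : ℕ) hs
        rw [hEs] at h1
        have hw' := hw s; rw [Finset.mem_Icc] at hw'
        have hwe'' := hwe' s
        simp only at h1
        split_ifs at h1 with hle
        · simp only [Set.mem_singleton_iff] at h1; omega
        · simp only [Set.mem_Ici] at h1; omega
    rw [hset, hindep.measure_inter_preimage_eq_mul (Finset.range r) hmeasEs]
    have hfac : ∀ s ∈ Finset.range r,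
        μ (U s ⁻¹' Es s) = ENNReal.ofReal (OSAux.sig p q r (we s)) := by
      intro s hs
      rw [Finset.mem_range] at hs
      rw [hEs, OSAux.sig]
      simp only
      split_ifs with hle
      · have h1 : 1 ≤ we s := by
          have hw' := hw ⟨s, hs⟩; rw [Finset.mem_Icc] at hw'
          have h2 : we s = w ⟨s, hs⟩ := hwe' ⟨s, hs⟩; omega
        have hpre : U s ⁻¹' {we s} = {ω | U s ω = we s} := rfl
        rw [hpre, hU s (we s) h1]
      · have hpre : U s ⁻¹' Set.Ici (r + 2) = {ω | r + 2 ≤ U s ω} := rfl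
        rw [hpre, htail s]
    rw [Finset.prod_congr rfl hfac, ← ENNReal.ofReal_prod_of_nonneg (fun k _ => hsig_nonneg _)]
    congr 1
    rw [← Fin.prod_univ_eq_prod_range (fun s => OSAux.sig p q r (we s)) r]
    exact Finset.prod_congr rfl fun s _ => by rw [hwe' s]
  -- rewrite the integrand as a finite sum of indicators
  have hInt : ∫ ω, z ^ Y ω / (q + p * z) ^ M ω ∂μ
      = ∫ ω, (∑ w ∈ OSAux.PP r, Set.indicator {ω' | W ω' = w}
          (fun _ => OSAux.gg p q z w (OSAux.Tf w)) ω) ∂μ := by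
    refine integral_congr_ae ?_
    filter_upwards [hae] with ω hω
    obtain ⟨hwP, heq⟩ := hpt ω hω
    rw [heq]
    symm
    have hind : ∀ w ∈ OSAux.PP r,
        Set.indicator {ω' | W ω' = w} (fun _ => OSAux.gg p q z w (OSAux.Tf w)) ω
        = if W ω = w then OSAux.gg p q z w (OSAux.Tf w) else 0 := by
      intro w _
      rw [Set.indicator_apply]
      simp only [Set.mem_setOf_eq]
    rw [Finset.sum_congr rfl hind,
      Finset.sum_ite_eq (OSAux.PP r) (W ω) (fun w => OSAux.gg p q z w (OSAux.Tf w)),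
      if_pos hwP]
  rw [hInt, integral_finset_sum]
  · have hterm : ∀ w ∈ OSAux.PP r,
        ∫ ω, Set.indicator {ω' | W ω' = w} (fun _ => OSAux.gg p q z w (OSAux.Tf w)) ω ∂μ
        = (∏ s, OSAux.sig p q r (w s)) * OSAux.gg p q z w (OSAux.Tf w) := by
      intro w hw
      rw [integral_indicator (hWmeas w), setIntegral_const, measureReal_def, hμW w hw,
        ENNReal.toReal_ofReal (Finset.prod_nonneg fun s _ => hsig_nonneg _), smul_eq_mul]
    rw [Finset.sum_congr rfl hterm]
    exact OSAux.key p hp0 hp1 q hq z hz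
  · intro w _
    exact (integrable_const _).indicator (hWmeas w)
end

section
/- If U_1 ~ Geometric(p) and S_0 ~ Binomial(s, θ), then the p.g.f. G_{s,θ}(z) = E[z^T] satisfies G_{s,θ}(z) = z{G_{s,θq}(z) + (1 - θp)^s [1 - G_{s, θq/(1-θp)}(z)]}, where q = 1 - p. -/
open MeasureTheory ProbabilityTheory Finset
open scoped ENNReal NNReal
set_option linter.unusedSectionVars false
set_option maxHeartbeats 1000000


lemma choose_cast_id (s k i : ℕ) (h : k + 1 + i ≤ s) :
    (s.choose (k+1+i) : ℝ) * ((k+1+i).choose k) = (s.choose k) * ((s-k).choose (i+1)) := by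
  have := Nat.choose_mul (n := s) (k := k+1+i) (s := k) (by omega)
  have h2 : k + 1 + i - k = i + 1 := by omega
  rw [h2] at this
  exact_mod_cast congrArg (Nat.cast (R := ℝ)) this

lemma alg {p q θ z : ℝ} (s : ℕ) (g : ℕ → ℝ)
    (hq : q = 1 - p) (hc : 1 - θ * p ≠ 0)
    (hrec : ∀ r, g r = z * (q^r + ∑ k ∈ range r, (r.choose k : ℝ) * q^k * p^(r-k) * g k)) :
    ∑ r ∈ range (s+1), (s.choose r : ℝ) * θ^r * (1-θ)^(s-r) * g r
    = z * ((∑ k ∈ range (s+1), (s.choose k : ℝ) * (θ*q)^k * (1-(θ*q))^(s-k) * g k)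
      + (1-θ*p)^s * (1 - ∑ k ∈ range (s+1),
          (s.choose k : ℝ) * (θ*q/(1-θ*p))^k * (1-(θ*q/(1-θ*p)))^(s-k) * g k)) := by
  subst hq
  -- Step A : clear the denominators in the last sum
  have stepA : (1-θ*p)^s * ∑ k ∈ range (s+1),
      (s.choose k : ℝ) * (θ*(1-p)/(1-θ*p))^k * (1-(θ*(1-p)/(1-θ*p)))^(s-k) * g k
      = ∑ k ∈ range (s+1), (s.choose k : ℝ) * (θ*(1-p))^k * (1-θ)^(s-k) * g k := by
    rw [Finset.mul_sum]
    refine Finset.sum_congr rfl fun k hk => ?_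
    have hk' : k ≤ s := by simpa [Nat.lt_succ_iff] using hk
    have h1 : 1 - θ*(1-p)/(1-θ*p) = (1-θ)/(1-θ*p) := by
      field_simp; ring
    rw [h1, div_pow, div_pow,
      show (1-θ*p)^s = (1-θ*p)^k * (1-θ*p)^(s-k) by
        rw [← pow_add, Nat.add_sub_cancel' hk']]
    have h2 : (1-θ*p)^k ≠ 0 := pow_ne_zero _ hc
    have h3 : (1-θ*p)^(s-k) ≠ 0 := pow_ne_zero _ hc
    field_simp
  -- Step B : binomial theorem pieces
  have stepB : ∑ r ∈ range (s+1), (s.choose r : ℝ) * θ^r * (1-θ)^(s-r) * (z * (1-p)^r)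
      = z * (1-θ*p)^s := by
    have hb := add_pow (θ*(1-p)) (1-θ) s
    have he : θ*(1-p) + (1-θ) = 1-θ*p := by ring
    rw [he] at hb
    rw [hb, Finset.mul_sum]
    exact Finset.sum_congr rfl fun r _ => by rw [mul_pow]; ring
  -- Step C : inner sums
  have stepC : ∀ k, k ∈ range (s+1) →
      ∑ r ∈ Ico (k+1) (s+1), (s.choose r : ℝ)*θ^r*(1-θ)^(s-r) *
        ((r.choose k:ℝ) * (1-p)^k * p^(r-k) * g k)
      = (s.choose k : ℝ) * (θ*(1-p))^k *
          ((1-θ*(1-p))^(s-k) - (1-θ)^(s-k)) * g k := by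
    intro k hk
    have hk' : k ≤ s := by simpa [Nat.lt_succ_iff] using hk
    have expand : (1-θ*(1-p))^(s-k) - (1-θ)^(s-k)
        = ∑ i ∈ range (s-k), (θ*p)^(i+1) * (1-θ)^(s-k-(i+1)) * ((s-k).choose (i+1) : ℝ) := by
      have hb := add_pow (θ*p) (1-θ) (s-k)
      rw [show θ*p + (1-θ) = 1-θ*(1-p) by ring] at hb
      rw [hb, Finset.sum_range_succ']
      simp
    rw [Finset.sum_Ico_eq_sum_range, show s+1-(k+1) = s-k from by omega, expand,
      Finset.mul_sum, Finset.sum_mul]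
    refine Finset.sum_congr rfl fun i hi => ?_
    have hi' : i < s - k := by simpa using hi
    have h : k + 1 + i ≤ s := by omega
    have hch := choose_cast_id s k i h
    rw [show s-(k+1+i) = s-k-(i+1) by omega, show k+1+i-k = 1+i by omega, mul_pow, mul_pow]
    linear_combination (θ^(k+1+i) * (1-θ)^(s-k-(i+1)) * (1-p)^k * p^(1+i) * g k) * hch
  -- expand the left-hand side with the recursion
  have expandL : ∑ r ∈ range (s+1), (s.choose r : ℝ)*θ^r*(1-θ)^(s-r) * g r
      = (∑ r ∈ range (s+1), (s.choose r : ℝ)*θ^r*(1-θ)^(s-r) * (z*(1-p)^r))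
        + ∑ r ∈ range (s+1), ∑ k ∈ range r,
            (s.choose r:ℝ)*θ^r*(1-θ)^(s-r) * (z * ((r.choose k:ℝ)*(1-p)^k*p^(r-k)*g k)) := by
    rw [← Finset.sum_add_distrib]
    refine Finset.sum_congr rfl fun r _ => ?_
    rw [hrec r, mul_add, mul_add, Finset.mul_sum, Finset.mul_sum]
  have swap : ∑ r ∈ range (s+1), ∑ k ∈ range r,
        (s.choose r:ℝ)*θ^r*(1-θ)^(s-r) * (z * ((r.choose k:ℝ)*(1-p)^k*p^(r-k)*g k))
      = ∑ k ∈ range (s+1), ∑ r ∈ Ico (k+1) (s+1),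
        (s.choose r:ℝ)*θ^r*(1-θ)^(s-r) * (z * ((r.choose k:ℝ)*(1-p)^k*p^(r-k)*g k)) := by
    simp only [Finset.range_eq_Ico]
    rw [Finset.sum_Ico_Ico_comm' 0 (s+1)
      (fun k r => (s.choose r:ℝ)*θ^r*(1-θ)^(s-r) * (z * ((r.choose k:ℝ)*(1-p)^k*p^(r-k)*g k)))]
  have inner : ∀ k ∈ range (s+1), ∑ r ∈ Ico (k+1) (s+1),
        (s.choose r:ℝ)*θ^r*(1-θ)^(s-r) * (z * ((r.choose k:ℝ)*(1-p)^k*p^(r-k)*g k))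
      = z * ((s.choose k : ℝ) * (θ*(1-p))^k *
          ((1-θ*(1-p))^(s-k) - (1-θ)^(s-k)) * g k) := by
    intro k hk
    rw [← stepC k hk, Finset.mul_sum]
    exact Finset.sum_congr rfl fun r _ => by ring
  have split : ∑ k ∈ range (s+1), z * ((s.choose k : ℝ) * (θ*(1-p))^k *
          ((1-θ*(1-p))^(s-k) - (1-θ)^(s-k)) * g k)
      = z * (∑ k ∈ range (s+1), (s.choose k:ℝ) * (θ*(1-p))^k * (1-(θ*(1-p)))^(s-k) * g k)
        - z * (∑ k ∈ range (s+1), (s.choose k:ℝ) * (θ*(1-p))^k * (1-θ)^(s-k) * g k) := by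
    rw [Finset.mul_sum, Finset.mul_sum, ← Finset.sum_sub_distrib]
    exact Finset.sum_congr rfl fun k _ => by ring
  rw [expandL, stepB, swap, Finset.sum_congr rfl inner, split]
  linear_combination z * stepA

namespace BPGF


noncomputable def hfun (p q : ℝ) : ℕ → ℕ → ℝ
  | _, 0 => 0
  | r, 1 => q ^ r
  | r, (n+2) => ∑ k ∈ (Finset.range r).attach,
      (r.choose k.1 : ℝ) * q ^ (k.1 : ℕ) * p ^ (r - k.1) * hfun p q k.1 (n+1)
  termination_by r _ => r
  decreasing_by exact Finset.mem_range.mp k.2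

lemma hfun_zero (p q : ℝ) (r : ℕ) : hfun p q r 0 = 0 := by rw [hfun]

lemma hfun_one (p q : ℝ) (r : ℕ) : hfun p q r 1 = q ^ r := by rw [hfun]

lemma hfun_succ_succ (p q : ℝ) (r n : ℕ) :
    hfun p q r (n+2) = ∑ k ∈ Finset.range r,
      (r.choose k : ℝ) * q ^ k * p ^ (r - k) * hfun p q k (n+1) := by
  rw [hfun, ← Finset.sum_attach (Finset.range r)
    (fun k => (r.choose k : ℝ) * q ^ k * p ^ (r - k) * hfun p q k (n+1))]

lemma hfun_nonneg {p q : ℝ} (hp : 0 ≤ p) (hq : 0 ≤ q) : ∀ n r, 0 ≤ hfun p q r n := by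
  intro n
  induction n using Nat.strong_induction_on with
  | _ n ih =>
    match n with
    | 0 => intro r; rw [hfun_zero]
    | 1 => intro r; rw [hfun_one]; positivity
    | (m+2) =>
      intro r
      rw [hfun_succ_succ]
      refine Finset.sum_nonneg fun k _ => ?_
      have h1 := ih (m+1) (by omega) k
      positivity

lemma hfun_eq_zero {p q : ℝ} : ∀ n r, r + 2 ≤ n → hfun p q r n = 0 := by
  intro n
  induction n using Nat.strong_induction_on with
  | _ n ih =>
    match n with
    | 0 => intro r h; omega
    | 1 => intro r h; omega
    | (m+2) =>
      intro r h
      rw [hfun_succ_succ]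
      refine Finset.sum_eq_zero fun k hk => ?_
      rw [ih (m+1) (by omega) k (by simp at hk; omega), mul_zero]


variable {Ω : Type*} [MeasurableSpace Ω]

def tset (U : ℕ → Ω → ℕ) (a : ℕ) (J : Finset ℕ) (ω : Ω) : Set ℕ :=
  {n | 1 ≤ n ∧ ∀ s ∈ J, U s ω ≠ n + a}

noncomputable def tJ (U : ℕ → Ω → ℕ) (a : ℕ) (J : Finset ℕ) (ω : Ω) : ℕ :=
  sInf (tset U a J ω)

lemma tset_exists (U : ℕ → Ω → ℕ) (a : ℕ) (J : Finset ℕ) (ω : Ω) :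
    ∃ m, m ∈ tset U a J ω ∧ m ≤ J.card + 1 := by
  have hcard : ¬ (Finset.Icc 1 (J.card + 1) ⊆ J.image (fun s => U s ω - a)) := by
    intro hsub
    have h1 := Finset.card_le_card hsub
    have h2 : (Finset.Icc 1 (J.card+1)).card = J.card + 1 := by
      rw [Nat.card_Icc]; omega
    have h3 := Finset.card_image_le (s := J) (f := fun s => U s ω - a)
    omega
  obtain ⟨m, hm1, hm2⟩ := Finset.not_subset.mp hcard
  rw [Finset.mem_Icc] at hm1
  refine ⟨m, ⟨hm1.1, fun s hs heq => hm2 ?_⟩, hm1.2⟩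
  exact Finset.mem_image.mpr ⟨s, hs, by omega⟩

lemma tset_nonempty (U : ℕ → Ω → ℕ) (a : ℕ) (J : Finset ℕ) (ω : Ω) :
    (tset U a J ω).Nonempty := by
  obtain ⟨m, hm, _⟩ := tset_exists U a J ω; exact ⟨m, hm⟩

lemma tJ_mem (U : ℕ → Ω → ℕ) (a : ℕ) (J : Finset ℕ) (ω : Ω) :
    tJ U a J ω ∈ tset U a J ω := Nat.sInf_mem (tset_nonempty U a J ω)

lemma one_le_tJ (U : ℕ → Ω → ℕ) (a : ℕ) (J : Finset ℕ) (ω : Ω) : 1 ≤ tJ U a J ω :=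
  (tJ_mem U a J ω).1

lemma tJ_le (U : ℕ → Ω → ℕ) (a : ℕ) (J : Finset ℕ) (ω : Ω) : tJ U a J ω ≤ J.card + 1 := by
  obtain ⟨m, hm, hm2⟩ := tset_exists U a J ω
  exact le_trans (Nat.sInf_le hm) hm2

lemma tJ_eq_one_iff (U : ℕ → Ω → ℕ) (a : ℕ) (J : Finset ℕ) (ω : Ω) :
    tJ U a J ω = 1 ↔ ∀ s ∈ J, U s ω ≠ 1 + a := by
  constructor
  · intro h
    have := tJ_mem U a J ω
    rw [h] at this
    exact this.2
  · intro h
    have h1 : (1 : ℕ) ∈ tset U a J ω := ⟨le_refl 1, h⟩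
    exact le_antisymm (Nat.sInf_le h1) (one_le_tJ U a J ω)

lemma tJ_shift {U : ℕ → Ω → ℕ} {a : ℕ} {J K : Finset ℕ} (hKJ : K ⊆ J) (hKne : K.Nonempty)
    (ω : Ω) (h1 : ∀ s ∈ K, U s ω = a + 1) (h2 : ∀ s ∈ J \ K, a + 1 < U s ω) :
    tJ U a J ω = tJ U (a+1) (J \ K) ω + 1 := by
  set m₀ := tJ U (a+1) (J \ K) ω with hm₀def
  have hm₀ : m₀ ∈ tset U (a+1) (J\K) ω := tJ_mem U (a+1) (J\K) ω
  have h1m : 1 ≤ m₀ := hm₀.1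
  have hup : m₀ + 1 ∈ tset U a J ω := by
    refine ⟨by omega, fun s hs => ?_⟩
    by_cases hsK : s ∈ K
    · rw [h1 s hsK]; omega
    · have := hm₀.2 s (Finset.mem_sdiff.mpr ⟨hs, hsK⟩); omega
  have hlow : ∀ j, j < m₀ + 1 → j ∉ tset U a J ω := by
    intro j hj hjmem
    rcases Nat.lt_or_ge j 2 with hj1 | hj2
    · obtain ⟨s₀, hs₀⟩ := hKne
      have hj' : j = 1 := by have := hjmem.1; omega
      exact hjmem.2 s₀ (hKJ hs₀) (by rw [h1 s₀ hs₀]; omega)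
    · have hmem2 : j - 1 ∈ tset U (a+1) (J\K) ω := by
        refine ⟨by omega, fun s hs => ?_⟩
        have := hjmem.2 s (Finset.mem_sdiff.mp hs).1
        omega
      have hle2 : m₀ ≤ j - 1 := Nat.sInf_le hmem2
      omega
  have hle : tJ U a J ω ≤ m₀ + 1 := Nat.sInf_le hup
  have hmem := tJ_mem U a J ω
  have hnlt : ¬ tJ U a J ω < m₀ + 1 := fun hlt => hlow _ hlt hmem
  omega

lemma meas_event {U : ℕ → Ω → ℕ} (hUm : ∀ s, Measurable (U s)) (J : Finset ℕ)
    (P : (J → ℕ) → Prop) : MeasurableSet {ω | P (fun i : J => U i ω)} :=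
  (measurable_pi_lambda (fun ω (i : J) => U i ω) fun i => hUm i) MeasurableSet.of_discrete

lemma tJ_subtype (U : ℕ → Ω → ℕ) (a : ℕ) (J : Finset ℕ) (ω : Ω) :
    tJ U a J ω = sInf {m | 1 ≤ m ∧ ∀ i : J, U i ω ≠ m + a} := by
  unfold tJ tset
  congr 1
  ext m
  simp [Subtype.forall]


section Prob
variable {Ω : Type*} [MeasurableSpace Ω] {μ : Measure Ω} [IsProbabilityMeasure μ]
variable {p q : ℝ} {U : ℕ → Ω → ℕ}


lemma measU (hUm : ∀ s, Measurable (U s)) (s : ℕ) (P : ℕ → Prop) :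
    MeasurableSet {ω | P (U s ω)} := hUm s (MeasurableSet.of_discrete (s := {n | P n}))

lemma tail_measure (hp : 0 < p ∧ p < 1) (hq : q = 1 - p) (hUm : ∀ s, Measurable (U s))
    (hU : ∀ s n, 1 ≤ n → μ {ω | U s ω = n} = ENNReal.ofReal (p * q ^ (n - 1)))
    (hU0 : ∀ s, μ {ω | U s ω = 0} = 0) (s : ℕ) :
    ∀ a : ℕ, μ {ω | a < U s ω} = ENNReal.ofReal (q ^ a) := by
  have hq0 : 0 ≤ q := by rw [hq]; linarith [hp.2]
  have hp0 : 0 ≤ p := le_of_lt hp.1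
  intro a
  induction a with
  | zero =>
    have hcompl : {ω | 0 < U s ω} = {ω | U s ω = 0}ᶜ := by
      ext ω; simp [Nat.pos_iff_ne_zero]
    have hm0 : MeasurableSet {ω | U s ω = 0} := measU hUm s (· = 0)
    rw [hcompl, prob_compl_eq_one_sub hm0, hU0 s]
    simp
  | succ a ih =>
    have hsplit : {ω | a < U s ω} = {ω | U s ω = a+1} ∪ {ω | a+1 < U s ω} := by
      ext ω; simp only [Set.mem_setOf_eq, Set.mem_union]; omega
    have hdisj : Disjoint {ω | U s ω = a+1} {ω | a+1 < U s ω} := by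
      rw [Set.disjoint_left]; intro ω h1 h2; simp only [Set.mem_setOf_eq] at h1 h2; omega
    have hmeas2 : MeasurableSet {ω | a+1 < U s ω} := measU hUm s (a+1 < ·)
    have hun := measure_union (μ := μ) hdisj hmeas2
    rw [hsplit, hun, hU s (a+1) (by omega)] at ih
    simp only [Nat.add_sub_cancel] at ih
    have hkey : ENNReal.ofReal (p * q ^ a) + μ {ω | a+1 < U s ω}
        = ENNReal.ofReal (p * q ^ a) + ENNReal.ofReal (q ^ (a+1)) := by
      rw [ih, ← ENNReal.ofReal_add (by positivity) (by positivity)]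
      congr 1
      rw [hq]; ring
    exact (ENNReal.add_right_inj ENNReal.ofReal_ne_top).mp hkey


lemma ML (hp : 0 < p ∧ p < 1) (hq : q = 1 - p) (hUm : ∀ s, Measurable (U s))
    (hindep : iIndepFun U μ)
    (hU : ∀ s n, 1 ≤ n → μ {ω | U s ω = n} = ENNReal.ofReal (p * q ^ (n - 1)))
    (hU0 : ∀ s, μ {ω | U s ω = 0} = 0) :
    ∀ (n : ℕ) (J : Finset ℕ) (a : ℕ),
      μ {ω | (∀ s ∈ J, a < U s ω) ∧ tJ U a J ω = n}
        = ENNReal.ofReal (q ^ (a * J.card) * hfun p q J.card n) := by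
  have hq0 : 0 ≤ q := by rw [hq]; linarith [hp.2]
  have hp0 : 0 ≤ p := le_of_lt hp.1
  intro n
  induction n with
  | zero =>
    intro J a
    have hempty : {ω | (∀ s ∈ J, a < U s ω) ∧ tJ U a J ω = 0} = ∅ := by
      ext ω
      simp only [Set.mem_setOf_eq, Set.mem_empty_iff_false, iff_false, not_and]
      intro _ h0
      have := one_le_tJ U a J ω; omega
    rw [hempty, hfun_zero, mul_zero, ENNReal.ofReal_zero, measure_empty]
  | succ n ih =>
    match n, ih with
    | 0, _ =>
      intro J a
      have hset : {ω | (∀ s ∈ J, a < U s ω) ∧ tJ U a J ω = 1}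
          = ⋂ s ∈ J, U s ⁻¹' {x | a + 1 < x} := by
        ext ω
        simp only [Set.mem_setOf_eq, Set.mem_iInter, Set.mem_preimage, tJ_eq_one_iff]
        constructor
        · rintro ⟨h1, h2⟩ s hs; have := h1 s hs; have := h2 s hs; omega
        · intro h
          exact ⟨fun s hs => by have := h s hs; omega,
            fun s hs => by have := h s hs; omega⟩
      rw [hset, hindep.measure_inter_preimage_eq_mul J
        (sets := fun _ => {x | a + 1 < x}) (fun i _ => MeasurableSet.of_discrete)]
      have heach : ∀ s ∈ J, μ (U s ⁻¹' {x | a + 1 < x}) = ENNReal.ofReal (q ^ (a+1)) :=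
        fun s _ => tail_measure hp hq hUm hU hU0 s (a+1)
      rw [Finset.prod_congr rfl heach, Finset.prod_const,
        ← ENNReal.ofReal_pow (by positivity), hfun_one, ← pow_mul, ← pow_add]
      congr 2
      ring
    | (m+1), ih =>
      intro J a
      set c := J.card with hc
      set E := {ω | (∀ s ∈ J, a < U s ω) ∧ tJ U a J ω = m+1+1} with hE
      have hEmeas : MeasurableSet E := by
        have hrw : E = {ω | (fun v : J → ℕ =>
            (∀ i : J, a < v i) ∧ sInf {k | 1 ≤ k ∧ ∀ i : J, v i ≠ k + a} = m+1+1)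
            (fun i : J => U i ω)} := by
          ext ω; simp only [hE, Set.mem_setOf_eq, tJ_subtype, Subtype.forall]
        rw [hrw]
        exact meas_event hUm J (fun v => (∀ i : J, a < v i) ∧
          sInf {k | 1 ≤ k ∧ ∀ i : J, v i ≠ k + a} = m+1+1)
      set C := fun K : Finset ℕ => {ω | ∀ s ∈ J, (U s ω = a + 1 ↔ s ∈ K)} with hCdef
      have hCmeas : ∀ K, MeasurableSet (C K) := by
        intro K
        have hrw : C K = {ω | (fun v : J → ℕ => ∀ i : J, (v i = a + 1 ↔ (i : ℕ) ∈ K))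
            (fun i : J => U i ω)} := by
          ext ω; simp only [hCdef, Set.mem_setOf_eq, Subtype.forall]
        rw [hrw]
        exact meas_event hUm J (fun v => ∀ i : J, (v i = a + 1 ↔ (i : ℕ) ∈ K))
      have hcover : E = ⋃ K ∈ J.powerset, (E ∩ C K) := by
        ext ω
        simp only [Set.mem_iUnion, Set.mem_inter_iff, Finset.mem_powerset]
        constructor
        · intro hω
          refine ⟨J.filter (fun s => U s ω = a+1), Finset.filter_subset _ _, hω, ?_⟩
          intro s hs
          simp [hCdef, Finset.mem_filter, hs]
        · rintro ⟨K, -, hω, -⟩; exact hω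
      have hdisj : Set.PairwiseDisjoint (↑J.powerset) (fun K => E ∩ C K) := by
        intro K₁ h₁ K₂ h₂ hne
        rw [Finset.mem_coe, Finset.mem_powerset] at h₁ h₂
        rw [Function.onFun, Set.disjoint_left]
        rintro ω ⟨-, hω₁⟩ ⟨-, hω₂⟩
        apply hne
        ext x
        by_cases hxJ : x ∈ J
        · rw [← hω₁ x hxJ, ← hω₂ x hxJ]
        · constructor <;> intro hx
          · exact absurd (h₁ hx) hxJ
          · exact absurd (h₂ hx) hxJ
      set f₀ : ℕ → ℝ := fun j => if j = 0 then 0 else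
        (p * q^a)^j * (q^((a+1)*(c - j)) * hfun p q (c - j) (m+1)) with hf₀
      have hf₀nn : ∀ j, 0 ≤ f₀ j := by
        intro j
        rw [hf₀]
        dsimp only
        split
        · exact le_refl 0
        · have := hfun_nonneg hp0 hq0 (m+1) (c - j); positivity
      have hterm : ∀ K ∈ J.powerset, μ (E ∩ C K) = ENNReal.ofReal (f₀ K.card) := by
        intro K hK
        rw [Finset.mem_powerset] at hK
        by_cases hKe : K = ∅
        · subst hKe
          have hzero : E ∩ C ∅ = ∅ := by
            ext ω
            simp only [Set.mem_inter_iff, hE, hCdef, Set.mem_setOf_eq,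
              Finset.notMem_empty, iff_false, Set.mem_empty_iff_false]
            rintro ⟨⟨h1, h2⟩, h3⟩
            have h4 : tJ U a J ω = 1 := (tJ_eq_one_iff U a J ω).mpr (fun s hs => by
              have := h3 s hs; omega)
            omega
          rw [hzero, measure_empty, hf₀]
          simp
        · have hKne : K.Nonempty := Finset.nonempty_iff_ne_empty.mpr hKe
          have hsplitE : E ∩ C K = (⋂ s ∈ K, U s ⁻¹' {a+1}) ∩
              {ω | (∀ s ∈ J \ K, a + 1 < U s ω) ∧ tJ U (a+1) (J \ K) ω = m+1} := by
            ext ω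
            simp only [Set.mem_inter_iff, hE, hCdef, Set.mem_setOf_eq, Set.mem_iInter,
              Set.mem_preimage, Set.mem_singleton_iff]
            constructor
            · rintro ⟨⟨h1, h2⟩, h3⟩
              have hKval : ∀ s ∈ K, U s ω = a + 1 := fun s hs => (h3 s (hK hs)).mpr hs
              have hJK : ∀ s ∈ J \ K, a + 1 < U s ω := by
                intro s hs
                rcases Finset.mem_sdiff.mp hs with ⟨hsJ, hsK⟩
                have hne : U s ω ≠ a + 1 := fun h => hsK ((h3 s hsJ).mp h)
                have := h1 s hsJ; omega
              refine ⟨hKval, hJK, ?_⟩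
              have := tJ_shift hK hKne ω hKval hJK
              omega
            · rintro ⟨hKval, hJK, htJ'⟩
              have h1 : ∀ s ∈ J, a < U s ω := by
                intro s hs
                by_cases hsK : s ∈ K
                · rw [hKval s hsK]; omega
                · have := hJK s (Finset.mem_sdiff.mpr ⟨hs, hsK⟩); omega
              have h3 : ∀ s ∈ J, (U s ω = a + 1 ↔ s ∈ K) := by
                intro s hs
                constructor
                · intro hval
                  by_contra hsK
                  have := hJK s (Finset.mem_sdiff.mpr ⟨hs, hsK⟩); omega
                · exact hKval s
              refine ⟨⟨h1, ?_⟩, h3⟩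
              rw [tJ_shift hK hKne ω hKval hJK, htJ']
          rw [hsplitE]
          have hIF := hindep.indepFun_finset K (J \ K) Finset.disjoint_sdiff hUm
          have hA : (⋂ s ∈ K, U s ⁻¹' {a+1})
              = (fun ω (i : K) => U i ω) ⁻¹' {v : K → ℕ | ∀ i : K, v i = a + 1} := by
            ext ω; simp [Subtype.forall]
          have hB : {ω | (∀ s ∈ J \ K, a + 1 < U s ω) ∧ tJ U (a+1) (J \ K) ω = m+1}
              = (fun ω (i : (J \ K : Finset ℕ)) => U i ω) ⁻¹'
                {v : (J \ K : Finset ℕ) → ℕ | (∀ i, a + 1 < v i)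
                  ∧ sInf {k | 1 ≤ k ∧ ∀ i, v i ≠ k + (a+1)} = m+1} := by
            ext ω
            simp only [Set.mem_setOf_eq, Set.mem_preimage, tJ_subtype, Subtype.forall]
          rw [hA, hB, hIF.measure_inter_preimage_eq_mul _ _ MeasurableSet.of_discrete
            MeasurableSet.of_discrete, ← hA, ← hB]
          have hAval : μ (⋂ s ∈ K, U s ⁻¹' {a+1}) = ENNReal.ofReal ((p * q^a)^K.card) := by
            rw [hindep.measure_inter_preimage_eq_mul K (sets := fun _ => ({a+1} : Set ℕ))
              (fun i _ => MeasurableSet.of_discrete)]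
            have heach : ∀ s ∈ K, μ (U s ⁻¹' {a+1}) = ENNReal.ofReal (p * q^a) := by
              intro s _
              have := hU s (a+1) (by omega)
              simp only [Nat.add_sub_cancel] at this; exact this
            rw [Finset.prod_congr rfl heach, Finset.prod_const,
              ← ENNReal.ofReal_pow (by positivity)]
          have hBval := ih (J \ K) (a+1)
          have hKcard : K.card ≠ 0 := by simpa [Finset.card_eq_zero] using hKe
          have hfK : f₀ K.card = (p * q^a)^K.card *
              (q^((a+1)*(c - K.card)) * hfun p q (c - K.card) (m+1)) := by
            simp only [hf₀, if_neg hKcard]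
          rw [hAval, hBval, Finset.card_sdiff_of_subset hK,
            ← ENNReal.ofReal_mul (by positivity), hfK, ← hc]
      rw [hcover, measure_biUnion_finset hdisj (fun K _ => hEmeas.inter (hCmeas K)),
        Finset.sum_congr rfl hterm,
        ← ENNReal.ofReal_sum_of_nonneg (fun K _ => hf₀nn K.card)]
      congr 1
      rw [Finset.sum_powerset_apply_card f₀, ← hc, hfun_succ_succ, Finset.mul_sum,
        ← Finset.sum_range_reflect]
      simp only [Nat.add_sub_cancel]
      rw [Finset.sum_range_succ]
      have hlast : (c.choose (c - c)) • f₀ (c - c) = 0 := by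
        rw [hf₀]; simp
      rw [hlast, add_zero]
      refine Finset.sum_congr rfl fun k hk => ?_
      have hkc : k < c := Finset.mem_range.mp hk
      rw [hf₀]
      dsimp only
      rw [if_neg (by omega), Nat.choose_symm (by omega : k ≤ c),
        show c - (c - k) = k by omega, nsmul_eq_mul, mul_pow]
      have hexp : a*(c-k)+(a+1)*k = a*c+k := by
        have h1 : a*(c-k) = a*c - a*k := Nat.mul_sub ..
        have h2 : a*k ≤ a*c := Nat.mul_le_mul_left a (le_of_lt hkc)
        have h3 : (a+1)*k = a*k+k := by ring
        omega
      have hqq : (q^a)^(c-k) * q^((a+1)*k) = q^(a*c) * q^k := by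
        rw [← pow_mul, ← pow_add, hexp, pow_add]
      linear_combination ((c.choose k : ℝ) * p^(c-k) * hfun p q k (m+1)) * hqq

lemma g_val (hp : 0 < p ∧ p < 1) (hq : q = 1 - p) (hUm : ∀ s, Measurable (U s))
    (hindep : iIndepFun U μ)
    (hU : ∀ s n, 1 ≤ n → μ {ω | U s ω = n} = ENNReal.ofReal (p * q ^ (n - 1)))
    (hU0 : ∀ s, μ {ω | U s ω = 0} = 0)
    (z : ℝ) (T : ℕ → Ω → ℕ) (hT' : ∀ m ω, T m ω = tJ U 0 (Finset.range m) ω) (m : ℕ) :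
    ∫ ω, z ^ (T m ω) ∂μ = ∑ n ∈ Finset.range (m+2), hfun p q m n * z^n := by
  have hq0 : 0 ≤ q := by rw [hq]; linarith [hp.2]
  have hp0 : 0 ≤ p := le_of_lt hp.1
  have hmeasT : ∀ n, MeasurableSet {ω | tJ U 0 (Finset.range m) ω = n} := by
    intro n
    set R : Finset ℕ := Finset.range m with hR
    have hrw : {ω | tJ U 0 R ω = n}
        = {ω | (fun v : R → ℕ =>
            sInf {k | 1 ≤ k ∧ ∀ i : R, v i ≠ k + 0} = n)
            (fun i : R => U i ω)} := by
      ext ω; simp only [Set.mem_setOf_eq, tJ_subtype]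
    rw [hrw]
    exact meas_event hUm R (fun v => sInf {k | 1 ≤ k ∧ ∀ i : R, v i ≠ k + 0} = n)
  have hpt : ∀ ω, z ^ (T m ω) = ∑ n ∈ Finset.range (m+2),
      Set.indicator {ω' | tJ U 0 (Finset.range m) ω' = n} (fun _ => z^n) ω := by
    intro ω
    have hle : tJ U 0 (Finset.range m) ω < m+2 := by
      have := tJ_le U 0 (Finset.range m) ω
      rw [Finset.card_range] at this
      omega
    have hstep : ∀ n ∈ Finset.range (m+2),
        Set.indicator {ω' | tJ U 0 (Finset.range m) ω' = n} (fun _ => z^n) ω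
        = if tJ U 0 (Finset.range m) ω = n then z^n else 0 := by
      intro n _
      rw [Set.indicator_apply]
      congr 1
    rw [Finset.sum_congr rfl hstep, Finset.sum_ite_eq,
      if_pos (Finset.mem_range.mpr hle), hT' m ω]
  have hint : ∫ ω, z ^ (T m ω) ∂μ = ∑ n ∈ Finset.range (m+2),
      ∫ ω, Set.indicator {ω' | tJ U 0 (Finset.range m) ω' = n} (fun _ => z^n) ω ∂μ := by
    rw [show (fun ω => z ^ (T m ω)) = fun ω => ∑ n ∈ Finset.range (m+2),
      Set.indicator {ω' | tJ U 0 (Finset.range m) ω' = n} (fun _ => z^n) ω from funext hpt]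
    exact integral_finset_sum _ (fun n _ =>
      (integrable_const (z^n)).indicator (hmeasT n))
  have hmu : ∀ n, μ {ω | tJ U 0 (Finset.range m) ω = n} = ENNReal.ofReal (hfun p q m n) := by
    intro n
    set A := {ω | tJ U 0 (Finset.range m) ω = n} with hA
    set B := {ω | ∀ s ∈ Finset.range m, 0 < U s ω} with hB
    have hnull : μ Bᶜ = 0 := by
      have hsub : Bᶜ ⊆ ⋃ s ∈ Finset.range m, {ω | U s ω = 0} := by
        intro ω hω
        simp only [hB, Set.mem_compl_iff, Set.mem_setOf_eq, not_forall] at hω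
        obtain ⟨s, hs, hval⟩ := hω
        simp only [Set.mem_iUnion, Set.mem_setOf_eq]
        exact ⟨s, hs, by omega⟩
      refine measure_mono_null hsub ?_
      exact (measure_biUnion_null_iff (Finset.range m).countable_toSet).mpr
        (fun s _ => hU0 s)
    have hAB : μ A = μ (A ∩ B) := by
      refine le_antisymm ?_ (measure_mono Set.inter_subset_left)
      calc μ A ≤ μ (A ∩ B) + μ (A \ B) := measure_le_inter_add_diff μ A B
        _ ≤ μ (A ∩ B) + μ Bᶜ := by
            gcongr
            exact Set.diff_subset_iff.mpr (by intro ω h; by_cases hω : ω ∈ B <;> simp [hω, h])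
        _ = μ (A ∩ B) := by rw [hnull, add_zero]
    have hABset : A ∩ B = {ω | (∀ s ∈ Finset.range m, 0 < U s ω)
        ∧ tJ U 0 (Finset.range m) ω = n} := by
      ext ω; simp only [hA, hB, Set.mem_inter_iff, Set.mem_setOf_eq]; tauto
    rw [hAB, hABset, ML hp hq hUm hindep hU hU0 n (Finset.range m) 0]
    rw [Finset.card_range, Nat.zero_mul, pow_zero, one_mul]
  rw [hint]
  refine Finset.sum_congr rfl fun n _ => ?_
  rw [integral_indicator_const _ (hmeasT n), measureReal_def, hmu n,
    ENNReal.toReal_ofReal (hfun_nonneg hp0 hq0 n m), smul_eq_mul]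

lemma g_rec (hp : 0 < p ∧ p < 1) (hq : q = 1 - p) (hUm : ∀ s, Measurable (U s))
    (hindep : iIndepFun U μ)
    (hU : ∀ s n, 1 ≤ n → μ {ω | U s ω = n} = ENNReal.ofReal (p * q ^ (n - 1)))
    (hU0 : ∀ s, μ {ω | U s ω = 0} = 0)
    (z : ℝ) (T : ℕ → Ω → ℕ) (hT' : ∀ m ω, T m ω = tJ U 0 (Finset.range m) ω)
    (g : ℕ → ℝ) (hg : ∀ m, g m = ∫ ω, z ^ (T m ω) ∂μ) (r : ℕ) :
    g r = z * (q^r + ∑ k ∈ Finset.range r, (r.choose k : ℝ) * q^k * p^(r-k) * g k) := by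
  have gk' : ∀ k, g k = ∑ i ∈ Finset.range (k+1), hfun p q k (i+1) * z^(i+1) := by
    intro k
    rw [hg k, g_val hp hq hUm hindep hU hU0 z T hT' k, Finset.sum_range_succ']
    simp [hfun_zero]
  have gr2 : g r = (∑ i ∈ Finset.range r, hfun p q r (i+2) * z^(i+2))
      + hfun p q r 1 * z^1 := by
    rw [gk' r, Finset.sum_range_succ']
  have hinner : ∀ k ∈ Finset.range r,
      z * g k = ∑ i ∈ Finset.range r, hfun p q k (i+1) * z^(i+2) := by
    intro k hk
    have hkr : k + 1 ≤ r := Finset.mem_range.mp hk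
    rw [gk' k, Finset.mul_sum]
    rw [Finset.sum_subset (Finset.range_subset_range.mpr hkr)]
    · exact Finset.sum_congr rfl fun i _ => by ring
    · intro i _ hi
      rw [hfun_eq_zero (i+1) k (by simp at hi; omega), zero_mul, mul_zero]
  have hswap : ∑ k ∈ Finset.range r, (r.choose k : ℝ) * q^k * p^(r-k) * (z * g k)
      = ∑ i ∈ Finset.range r, hfun p q r (i+2) * z^(i+2) := by
    calc ∑ k ∈ Finset.range r, (r.choose k:ℝ)*q^k*p^(r-k) * (z * g k)
        = ∑ k ∈ Finset.range r, ∑ i ∈ Finset.range r,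
            (r.choose k:ℝ)*q^k*p^(r-k) * (hfun p q k (i+1) * z^(i+2)) := by
          refine Finset.sum_congr rfl fun k hk => ?_
          rw [hinner k hk, Finset.mul_sum]
      _ = ∑ i ∈ Finset.range r, ∑ k ∈ Finset.range r,
            (r.choose k:ℝ)*q^k*p^(r-k) * (hfun p q k (i+1) * z^(i+2)) := Finset.sum_comm
      _ = ∑ i ∈ Finset.range r, hfun p q r (i+2) * z^(i+2) := by
          refine Finset.sum_congr rfl fun i _ => ?_
          rw [hfun_succ_succ, Finset.sum_mul]
          exact Finset.sum_congr rfl fun k _ => by ring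
  have hfinal : z * (q^r + ∑ k ∈ Finset.range r, (r.choose k:ℝ)*q^k*p^(r-k)*g k)
      = hfun p q r 1 * z^1 + ∑ k ∈ Finset.range r,
          (r.choose k:ℝ)*q^k*p^(r-k)*(z*g k) := by
    rw [mul_add, Finset.mul_sum, pow_one, hfun_one]
    congr 1
    · ring
    · exact Finset.sum_congr rfl fun k _ => by ring
  rw [gr2, hfinal, hswap]
  ring

end Prob
end BPGF

/-- **Functional equation for the p.g.f. under a binomial prior.** Response times
`U 0, U 1, …` are i.i.d. `Geometric(p)` (`P(U s = n) = p q^{n-1}`, `q = 1 - p`).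
For a pool of `m` clients put `X m n = #{s < m : U s = n}`,
`T m = min {n ≥ 1 : X m n = 0}` and `g m = E[z^{T m}]`.  For `θ ∈ [0,1]` the p.g.f. of
`T` under the `Binomial(s, θ)` prior is `G θ = ∑_{k=0}^s C(s,k) θ^k (1-θ)^{s-k} g k`,
and it satisfies
`G θ = z (G (θ q) + (1 - θ p)^s (1 - G (θ q / (1 - θ p))))`. -/
theorem binomial_pgf_functional_equation
    {Ω : Type*} [MeasurableSpace Ω] (μ : Measure Ω) [IsProbabilityMeasure μ]
    (p : ℝ) (hp : 0 < p ∧ p < 1) (q : ℝ) (hq : q = 1 - p)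
    (U : ℕ → Ω → ℕ) (hUm : ∀ s, Measurable (U s))
    (hindep : iIndepFun U μ)
    (hU : ∀ s, ∀ n, 1 ≤ n → μ {ω | U s ω = n} = ENNReal.ofReal (p * q ^ (n - 1)))
    (hU0 : ∀ s, μ {ω | U s ω = 0} = 0)
    (X : ℕ → ℕ → Ω → ℕ)
    (hX : ∀ m n ω, X m n ω = ((Finset.range m).filter (fun s => U s ω = n)).card)
    (T : ℕ → Ω → ℕ) (hT : ∀ m ω, T m ω = sInf {n | 1 ≤ n ∧ X m n ω = 0})
    (z : ℝ) (hz : 0 ≤ z)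
    (g : ℕ → ℝ) (hg : ∀ m, g m = ∫ ω, z ^ (T m ω) ∂μ)
    (s : ℕ)
    (G : ℝ → ℝ)
    (hG : ∀ θ, G θ = ∑ k ∈ Finset.range (s + 1),
        (s.choose k : ℝ) * θ ^ k * (1 - θ) ^ (s - k) * g k)
    (θ : ℝ) (hθ : 0 ≤ θ ∧ θ ≤ 1) :
    G θ = z * (G (θ * q) + (1 - θ * p) ^ s * (1 - G (θ * q / (1 - θ * p)))) := by
  obtain ⟨hθ0, hθ1⟩ := hθ
  have hc : 1 - θ * p ≠ 0 := by
    have h1 : θ * p < 1 := by nlinarith [hp.1, hp.2]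
    exact ne_of_gt (by linarith)
  have hT' : ∀ m ω, T m ω = BPGF.tJ U 0 (Finset.range m) ω := by
    intro m ω
    rw [hT m ω]
    unfold BPGF.tJ BPGF.tset
    congr 1
    ext n
    simp only [Set.mem_setOf_eq, hX, Finset.card_eq_zero, Finset.filter_eq_empty_iff,
      Nat.add_zero]
  have hrec : ∀ r, g r = z * (q^r + ∑ k ∈ Finset.range r,
      (r.choose k : ℝ) * q^k * p^(r-k) * g k) :=
    fun r => BPGF.g_rec hp hq hUm hindep (fun a n hn => hU a n hn) hU0 z T hT' g hg r
  rw [hG θ, hG (θ*q), hG (θ*q/(1-θ*p))]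
  exact alg s g hq hc hrec
end

section
/- If U_1 ~ Geometric(p), the conditional p.g.f.s g_r(z) = E[z^T | S_0 = r] satisfy g_0(z) = z and, for s ≥ 1, g_s(z) = (z/(1 + z q^s)) {q^s + G_{s,q}(z)}, where G_{s,q}(z) = Σ_{k=0}^s C(s,k) q^k (1-q)^{s-k} g_k(z) and q = 1 - p. -/
open MeasureTheory ProbabilityTheory
open scoped ENNReal NNReal

namespace PgfAux

open Finset


noncomputable def wt (p q : ℝ) (M j : ℕ) : ℝ :=
  if j = 0 then 0 else if j < M then p * q ^ (j - 1) else q ^ (M - 1)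

noncomputable def tauF {m : ℕ} (y : Fin m → ℕ) : ℕ := sInf {n | 1 ≤ n ∧ ∀ t, y t ≠ n}

noncomputable def S (p q z : ℝ) (m M : ℕ) : ℝ :=
  ∑ y ∈ Fintype.piFinset (fun _ : Fin m => Finset.range (M + 1)),
    (∏ t, wt p q M (y t)) * z ^ tauF y

def liftN (j : ℕ) : ℕ := if j = 0 then 0 else j + 1

variable {p q z : ℝ}

lemma wt_nonneg (hp : 0 ≤ p) (hq : 0 ≤ q) (M j : ℕ) : 0 ≤ wt p q M j := by
  unfold wt; split_ifs <;> positivity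

lemma sum_wt (hq : q = 1 - p) {M : ℕ} (hM : 1 ≤ M) :
    ∑ j ∈ Finset.range (M + 1), wt p q M j = 1 := by
  obtain ⟨N, rfl⟩ : ∃ N, M = N + 1 := ⟨M - 1, by omega⟩
  rw [Finset.sum_range_succ]
  have h1 : wt p q (N + 1) (N + 1) = q ^ N := by
    unfold wt; rw [if_neg (by omega), if_neg (by omega)]; simp
  have h2 : ∑ j ∈ Finset.range (N + 1), wt p q (N + 1) j
      = ∑ i ∈ Finset.range N, p * q ^ i := by
    rw [Finset.sum_range_succ']
    have h0 : wt p q (N + 1) 0 = 0 := by unfold wt; simp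
    rw [h0, add_zero]
    refine Finset.sum_congr rfl fun i hi => ?_
    rw [Finset.mem_range] at hi
    unfold wt
    rw [if_neg (by omega), if_pos (by omega)]
    simp
  rw [h1, h2, ← Finset.mul_sum]
  have hgeom : (∑ i ∈ Finset.range N, q ^ i) * (q - 1) = q ^ N - 1 := geom_sum_mul q N
  have hp' : p = 1 - q := by rw [hq]; ring
  have hps : p * ∑ i ∈ Finset.range N, q ^ i = 1 - q ^ N := by
    rw [hp']; linear_combination -hgeom
  linarith

lemma wt_lift {M : ℕ} (hM : 2 ≤ M) {j : ℕ} (hj : j < M) :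
    wt p q M (liftN j) = q * wt p q (M - 1) j := by
  rcases Nat.eq_zero_or_pos j with hj0 | hj0
  · subst hj0
    simp [liftN, wt]
  · have hl : liftN j = j + 1 := if_neg (by omega)
    rw [hl]
    have h1 : wt p q M (j + 1) = if j + 1 < M then p * q ^ j else q ^ (M - 1) := by
      unfold wt
      rw [if_neg (Nat.succ_ne_zero j)]
      simp
    have h2 : wt p q (M - 1) j = if j < M - 1 then p * q ^ (j - 1) else q ^ (M - 1 - 1) := by
      unfold wt
      rw [if_neg (show ¬ j = 0 by omega)]
    rcases lt_or_ge j (M - 1) with hlt | hge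
    · rw [h1, h2, if_pos (show j + 1 < M by omega), if_pos hlt]
      have e : q ^ j = q ^ (j - 1) * q := by
        rw [← pow_succ]
        congr 1
        omega
      rw [e]
      ring
    · rw [h1, h2, if_neg (show ¬ j + 1 < M by omega), if_neg (show ¬ j < M - 1 by omega)]
      have e : q ^ (M - 1) = q ^ (M - 1 - 1) * q := by
        rw [← pow_succ]
        congr 1
        omega
      rw [e]
      ring

lemma liftN_sub_one {c : ℕ} (hc : c ≠ 1) : liftN (c - 1) = c := by
  unfold liftN
  rcases Nat.eq_zero_or_pos c with h | h
  · subst h; simp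
  · rw [if_neg (by omega)]; omega

lemma exists_unhit {m : ℕ} (f : Fin m → ℕ) : ∃ n, 1 ≤ n ∧ n ≤ m + 1 ∧ ∀ t, f t ≠ n := by
  by_contra h
  push_neg at h
  have hsub : Finset.Icc 1 (m + 1) ⊆ Finset.image f Finset.univ := by
    intro n hn
    rw [Finset.mem_Icc] at hn
    obtain ⟨t, ht⟩ := h n hn.1 hn.2
    exact Finset.mem_image.2 ⟨t, Finset.mem_univ t, ht⟩
  have := Finset.card_le_card hsub
  have h1 : (Finset.Icc 1 (m + 1)).card = m + 1 := by rw [Nat.card_Icc]; omega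
  have h2 : (Finset.image f Finset.univ).card ≤ m := by
    calc (Finset.image f Finset.univ).card ≤ Finset.univ.card := Finset.card_image_le
    _ = m := by simp
  omega

lemma sInf_eq_of_agree {P Q : ℕ → Prop} {n₀ : ℕ} (h₀ : P n₀) (h₀' : Q n₀)
    (hag : ∀ n ≤ n₀, (P n ↔ Q n)) : sInf {n | P n} = sInf {n | Q n} := by
  have hPne : {n | P n}.Nonempty := ⟨n₀, h₀⟩
  have hQne : {n | Q n}.Nonempty := ⟨n₀, h₀'⟩
  have h1 : sInf {n | P n} ≤ n₀ := Nat.sInf_le h₀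
  have h2 : sInf {n | Q n} ≤ n₀ := Nat.sInf_le h₀'
  apply le_antisymm
  · exact Nat.sInf_le ((hag _ h2).2 (Nat.sInf_mem hQne))
  · exact Nat.sInf_le ((hag _ h1).1 (Nat.sInf_mem hPne))

lemma sInf_image_succ {P : ℕ → Prop} (hne : ∃ n, P n) :
    sInf {n | ∃ m, P m ∧ n = m + 1} = sInf {n | P n} + 1 := by
  have hmem : sInf {n | P n} ∈ {n | P n} := Nat.sInf_mem hne
  apply le_antisymm
  · exact Nat.sInf_le ⟨sInf {n | P n}, hmem, rfl⟩
  · apply le_csInf (⟨sInf {n | P n} + 1, sInf {n | P n}, hmem, rfl⟩ :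
      {n | ∃ m, P m ∧ n = m + 1}.Nonempty)
    rintro n ⟨m, hm, rfl⟩
    exact Nat.succ_le_succ (Nat.sInf_le hm)

lemma tauF_eq_one {m : ℕ} {y : Fin m → ℕ} (h : ∀ t, y t ≠ 1) : tauF y = 1 := by
  unfold tauF
  apply le_antisymm
  · exact Nat.sInf_le ⟨le_refl 1, h⟩
  · exact le_csInf ⟨1, le_refl 1, h⟩ (fun n hn => hn.1)

lemma inner_sum (hq : q = 1 - p) {s M : ℕ} (hM : 2 ≤ M) (A : Finset (Fin s)) :
    ∑ y ∈ (Fintype.piFinset fun _ : Fin s => Finset.range (M + 1)).filter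
        (fun y => Finset.univ.filter (fun t => y t = 1) = A),
      (∏ t, wt p q M (y t)) * z ^ tauF y
    = p ^ A.card * q ^ (s - A.card) *
      (if A = ∅ then z else z * S p q z (s - A.card) (M - 1)) := by
  classical
  set k := s - A.card with hk0
  have hk : Aᶜ.card = k := by
    rw [Finset.card_compl]; simp [hk0]
  set emb := Aᶜ.orderIsoOfFin hk with hemb
  have hwt1 : wt p q M 1 = p := by
    unfold wt
    rw [if_neg one_ne_zero, if_pos (by omega)]
    simp
  have hmemA : ∀ (y : Fin s → ℕ), (Finset.univ.filter (fun t => y t = 1) = A) ↔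
      (∀ t, y t = 1 ↔ t ∈ A) := by
    intro y
    constructor
    · intro h t
      rw [← h, Finset.mem_filter]
      simp
    · intro h
      ext t
      rw [Finset.mem_filter]
      simp [h t]
  set fwd : (Fin s → ℕ) → (Fin k → ℕ) := fun y i => y (emb i) - 1 with hfwd
  set bwd : (Fin k → ℕ) → (Fin s → ℕ) := fun v t => if h : t ∈ A then 1 else
      liftN (v (emb.symm ⟨t, Finset.mem_compl.mpr h⟩)) with hbwd
  have hbwd_pos : ∀ (v : Fin k → ℕ) (t : Fin s), t ∈ A → bwd v t = 1 := by
    intro v t h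
    rw [hbwd]
    exact dif_pos h
  have hbwd_neg : ∀ (v : Fin k → ℕ) (t : Fin s) (h : t ∉ A),
      bwd v t = liftN (v (emb.symm ⟨t, Finset.mem_compl.mpr h⟩)) := by
    intro v t h
    rw [hbwd]
    exact dif_neg h
  have key : ∑ y ∈ (Fintype.piFinset fun _ : Fin s => Finset.range (M + 1)).filter
        (fun y => Finset.univ.filter (fun t => y t = 1) = A),
      (∏ t, wt p q M (y t)) * z ^ tauF y
      = ∑ v ∈ Fintype.piFinset (fun _ : Fin k => Finset.range M),
        p ^ A.card * q ^ k * (∏ i, wt p q (M - 1) (v i)) *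
          z ^ (if A = ∅ then 1 else tauF v + 1) := by
    refine Finset.sum_bij' (fun y _ => fwd y) (fun v _ => bwd v) ?_ ?_ ?_ ?_ ?_
    · intro y hy
      beta_reduce
      rw [Finset.mem_filter] at hy
      obtain ⟨hy1, hy2⟩ := hy
      rw [Fintype.mem_piFinset] at hy1 ⊢
      intro i
      have := hy1 (emb i)
      rw [Finset.mem_range] at this ⊢
      simp only [hfwd]
      omega
    · intro v hv
      beta_reduce
      rw [Fintype.mem_piFinset] at hv
      rw [Finset.mem_filter]
      constructor
      · rw [Fintype.mem_piFinset]
        intro t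
        by_cases h : t ∈ A
        · rw [hbwd_pos v t h, Finset.mem_range]; omega
        · rw [hbwd_neg v t h, Finset.mem_range]
          have := hv (emb.symm ⟨t, Finset.mem_compl.mpr h⟩)
          rw [Finset.mem_range] at this
          unfold liftN
          split_ifs <;> omega
      · rw [hmemA]
        intro t
        by_cases h : t ∈ A
        · simp [hbwd_pos v t h, h]
        · rw [hbwd_neg v t h]
          unfold liftN
          constructor
          · intro hl; split_ifs at hl <;> omega
          · intro hA; exact absurd hA h
    · intro y hy
      beta_reduce
      rw [Finset.mem_filter] at hy
      obtain ⟨hy1, hy2⟩ := hy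
      rw [hmemA] at hy2
      funext t
      by_cases h : t ∈ A
      · rw [hbwd_pos _ t h]; exact ((hy2 t).2 h).symm
      · rw [hbwd_neg _ t h]
        have htc : t ∈ Aᶜ := Finset.mem_compl.mpr h
        have h1 : emb (emb.symm ⟨t, htc⟩) = ⟨t, htc⟩ := emb.apply_symm_apply _
        simp only [hfwd, h1]
        exact liftN_sub_one (fun h1' => h ((hy2 t).1 h1'))
    · intro v hv
      beta_reduce
      funext i
      have hic : (emb i : Fin s) ∈ Aᶜ := (emb i).2
      have hiA : ¬ ((emb i : Fin s) ∈ A) := Finset.mem_compl.mp hic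
      simp only [hfwd]
      rw [hbwd_neg v _ hiA]
      have h1 : (⟨(emb i : Fin s), Finset.mem_compl.mpr hiA⟩ : {x // x ∈ Aᶜ}) = emb i := by
        ext; rfl
      rw [h1, emb.symm_apply_apply]
      unfold liftN
      split_ifs <;> omega
    · intro y hy
      beta_reduce
      rw [Finset.mem_filter] at hy
      obtain ⟨hy1, hy2⟩ := hy
      rw [Fintype.mem_piFinset] at hy1
      rw [hmemA] at hy2
      have hprod : ∏ t, wt p q M (y t)
          = p ^ A.card * (q ^ k * ∏ i, wt p q (M - 1) (fwd y i)) := by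
        rw [← Finset.prod_mul_prod_compl A (fun t => wt p q M (y t))]
        congr 1
        · rw [Finset.prod_congr rfl (fun t ht => by rw [(hy2 t).2 ht, hwt1]),
            Finset.prod_const]
        · rw [← Finset.prod_coe_sort Aᶜ (fun t => wt p q M (y t)),
            ← Equiv.prod_comp emb.toEquiv (fun x : {x // x ∈ Aᶜ} => wt p q M (y x))]
          have hcoord : ∀ i ∈ (Finset.univ : Finset (Fin k)),
              wt p q M (y (emb.toEquiv i)) = q * wt p q (M - 1) (fwd y i) := by
            intro i _
            have hne1 : y (emb i) ≠ 1 := by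
              intro h1
              exact Finset.mem_compl.mp (emb i).2 ((hy2 _).1 h1)
            have hr : y (emb i) < M + 1 := by
              have := hy1 (emb i); rwa [Finset.mem_range] at this
            show wt p q M (y (emb i)) = q * wt p q (M - 1) (y (emb i) - 1)
            rw [← wt_lift hM (show y (emb i) - 1 < M by omega), liftN_sub_one hne1]
          rw [Finset.prod_congr rfl hcoord, Finset.prod_mul_distrib, Finset.prod_const]
          have : (Finset.univ : Finset (Fin k)).card = k := by
            simp
          rw [this]
      have htau : tauF y = if A = ∅ then 1 else tauF (fwd y) + 1 := by
        by_cases hA : A = ∅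
        · rw [if_pos hA]
          apply tauF_eq_one
          intro t h1
          have := (hy2 t).1 h1
          rw [hA] at this
          exact absurd this (Finset.notMem_empty t)
        · rw [if_neg hA]
          obtain ⟨t₀, ht₀⟩ := Finset.nonempty_iff_ne_empty.mpr hA
          have hy1' : y t₀ = 1 := (hy2 t₀).2 ht₀
          show sInf {n | 1 ≤ n ∧ ∀ t, y t ≠ n} = sInf {n | 1 ≤ n ∧ ∀ i, fwd y i ≠ n} + 1
          have hset : {n | 1 ≤ n ∧ ∀ t, y t ≠ n}
              = {n | ∃ m, (1 ≤ m ∧ ∀ i : Fin k, fwd y i ≠ m) ∧ n = m + 1} := by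
            ext n
            simp only [Set.mem_setOf_eq, hfwd]
            constructor
            · rintro ⟨hn1, hn2⟩
              have hn2' : 2 ≤ n := by
                rcases Nat.lt_or_ge n 2 with h | h
                · have hn1' : n = 1 := by omega
                  rw [hn1'] at hn2
                  exact absurd hy1' (hn2 t₀)
                · exact h
              refine ⟨n - 1, ⟨by omega, fun i => ?_⟩, by omega⟩
              have hne1 : y (emb i) ≠ 1 := by
                intro h1
                exact Finset.mem_compl.mp (emb i).2 ((hy2 _).1 h1)
              have := hn2 (emb i)
              omega
            · rintro ⟨m, ⟨hm1, hm2⟩, rfl⟩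
              refine ⟨by omega, fun t => ?_⟩
              by_cases h : t ∈ A
              · rw [(hy2 t).2 h]; omega
              · have htc : t ∈ Aᶜ := Finset.mem_compl.mpr h
                have hmi := hm2 (emb.symm ⟨t, htc⟩)
                have h1 : emb (emb.symm ⟨t, htc⟩) = ⟨t, htc⟩ := emb.apply_symm_apply _
                rw [h1] at hmi
                simp only at hmi
                have hne1 : y t ≠ 1 := fun h1' => h ((hy2 t).1 h1')
                omega
          rw [hset, sInf_image_succ]
          obtain ⟨n, hn1, _, hn3⟩ := exists_unhit (fwd y)
          exact ⟨n, hn1, hn3⟩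
      rw [hprod, htau]
      ring
  rw [key]
  have hMM : M - 1 + 1 = M := by omega
  by_cases hA : A = ∅
  · have hA0 : A.card = 0 := by rw [hA]; simp
    simp only [if_pos hA]
    have hcong : ∀ v ∈ Fintype.piFinset (fun _ : Fin k => Finset.range M),
        p ^ A.card * q ^ k * (∏ i, wt p q (M - 1) (v i)) * z ^ (1 : ℕ)
        = (p ^ A.card * q ^ k * z) * (∏ i, wt p q (M - 1) (v i)) := by
      intro v _; ring
    rw [Finset.sum_congr rfl hcong, ← Finset.mul_sum]
    have h1 : ∑ j ∈ Finset.range ((M - 1) + 1), wt p q (M - 1) j = 1 :=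
      sum_wt hq (by omega)
    rw [hMM] at h1
    have hsum : ∑ v ∈ Fintype.piFinset (fun _ : Fin k => Finset.range M),
        (∏ i : Fin k, wt p q (M - 1) (v i)) = 1 := by
      rw [Finset.sum_prod_piFinset]
      rw [Finset.prod_congr rfl (fun i _ => h1)]
      simp
    rw [hsum, mul_one, hA0]
  · simp only [if_neg hA]
    have hcong : ∀ v ∈ Fintype.piFinset (fun _ : Fin k => Finset.range M),
        p ^ A.card * q ^ k * (∏ i, wt p q (M - 1) (v i)) * z ^ (tauF v + 1)
        = (p ^ A.card * q ^ k * z) * ((∏ i, wt p q (M - 1) (v i)) * z ^ tauF v) := by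
      intro v _; ring
    rw [Finset.sum_congr rfl hcong, ← Finset.mul_sum]
    have hS : S p q z k (M - 1)
        = ∑ v ∈ Fintype.piFinset (fun _ : Fin k => Finset.range M),
          (∏ i, wt p q (M - 1) (v i)) * z ^ tauF v := by
      unfold S
      congr 1
      · congr 1
        funext i
        rw [hMM]
    rw [← hS]
    ring

lemma recursionS (hq : q = 1 - p) {s M : ℕ} (hs : 1 ≤ s) (hM : 2 ≤ M) :
    S p q z s M = z * q ^ s + z * ∑ k ∈ Finset.range s,
      (s.choose k : ℝ) * q ^ k * p ^ (s - k) * S p q z k (M - 1) := by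
  classical
  have hfib := Finset.sum_fiberwise
    (Fintype.piFinset fun _ : Fin s => Finset.range (M + 1))
    (fun y => Finset.univ.filter (fun t => y t = 1))
    (fun y => (∏ t, wt p q M (y t)) * z ^ tauF y)
  have hstep : S p q z s M
      = ∑ A : Finset (Fin s), p ^ A.card * q ^ (s - A.card) *
        (if A = ∅ then z else z * S p q z (s - A.card) (M - 1)) := by
    unfold S
    rw [← hfib]
    exact Finset.sum_congr rfl (fun A _ => inner_sum hq hM A)
  set F : ℕ → ℝ := fun j => if j = 0 then z * q ^ s
    else p ^ j * q ^ (s - j) * (z * S p q z (s - j) (M - 1)) with hF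
  have hstep2 : S p q z s M = ∑ A : Finset (Fin s), F A.card := by
    rw [hstep]
    refine Finset.sum_congr rfl (fun A _ => ?_)
    by_cases hA : A = ∅
    · subst hA
      simp [hF, mul_comm]
    · have hc : A.card ≠ 0 := by
        rw [Finset.card_ne_zero]
        exact Finset.nonempty_iff_ne_empty.mpr hA
      rw [hF]
      simp only [if_neg hA, if_neg hc]
  have hpow : ∑ A : Finset (Fin s), F A.card
      = ∑ j ∈ Finset.range (s + 1), (s.choose j : ℝ) * F j := by
    have h1 : (Finset.univ : Finset (Finset (Fin s)))
        = (Finset.univ : Finset (Fin s)).powerset := by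
      rw [Finset.powerset_univ]
    rw [h1, Finset.sum_powerset_apply_card]
    simp only [Finset.card_univ, Fintype.card_fin, nsmul_eq_mul]
  rw [hstep2, hpow, Finset.sum_range_succ']
  have h0 : (s.choose 0 : ℝ) * F 0 = z * q ^ s := by
    simp [hF]
  rw [h0]
  rw [add_comm]
  congr 1
  rw [Finset.mul_sum]
  rw [← Finset.sum_range_reflect (fun k => z * ((s.choose k : ℝ) * q ^ k * p ^ (s - k)
      * S p q z k (M - 1))) s]
  refine Finset.sum_congr rfl (fun i hi => ?_)
  rw [Finset.mem_range] at hi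
  have e1 : s - 1 - i = s - (i + 1) := by omega
  have e2 : s - (s - (i + 1)) = i + 1 := by omega
  have e3 : (s.choose (s - (i + 1)) : ℝ) = (s.choose (i + 1) : ℝ) := by
    rw [Nat.choose_symm (by omega)]
  have hc0 : i + 1 ≠ 0 := by omega
  simp only [hF, if_neg hc0]
  rw [e1, e3, e2]
  ring

end PgfAux
section Prob

open MeasureTheory ProbabilityTheory
open scoped ENNReal NNReal

variable {Ω : Type*} [MeasurableSpace Ω] (μ : Measure Ω) [IsProbabilityMeasure μ]
  (p q : ℝ) (U : ℕ → Ω → ℕ)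

lemma tail_measure (hp : 0 ≤ p) (hq0 : 0 ≤ q) (hpq : p + q = 1)
    (hUm : ∀ s, Measurable (U s))
    (hU : ∀ s n, 1 ≤ n → μ {ω | U s ω = n} = ENNReal.ofReal (p * q ^ (n - 1)))
    (hU0 : ∀ s, μ {ω | U s ω = 0} = 0)
    (t : ℕ) : ∀ n : ℕ, μ {ω | n + 1 ≤ U t ω} = ENNReal.ofReal (q ^ n) := by
  have hms : ∀ n, MeasurableSet {ω | U t ω = n} := by
    intro n
    exact hUm t (measurableSet_singleton n)
  have hms' : ∀ n, MeasurableSet {ω | n ≤ U t ω} := by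
    intro n
    have : {ω | n ≤ U t ω} = U t ⁻¹' (Set.Ici n) := rfl
    rw [this]
    exact hUm t ((Set.Ici n).to_countable.measurableSet)
  intro n
  induction n with
  | zero =>
    have hc : {ω | 0 + 1 ≤ U t ω} = {ω | U t ω = 0}ᶜ := by
      ext ω
      simp only [Set.mem_setOf_eq, Set.mem_compl_iff]
      omega
    rw [hc, measure_compl (hms 0) (measure_ne_top μ _), hU0 t]
    simp
  | succ n ih =>
    have hsplit : {ω | n + 1 ≤ U t ω} = {ω | U t ω = n + 1} ∪ {ω | n + 2 ≤ U t ω} := by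
      ext ω
      simp only [Set.mem_setOf_eq, Set.mem_union]
      omega
    have hdisj : Disjoint {ω | U t ω = n + 1} {ω | n + 2 ≤ U t ω} := by
      rw [Set.disjoint_left]
      intro ω h1 h2
      simp only [Set.mem_setOf_eq] at h1 h2
      omega
    have hmeas := measure_union (μ := μ) hdisj (hms' (n + 2))
    rw [← hsplit] at hmeas
    rw [ih, hU t (n + 1) (by omega)] at hmeas
    have hsimp : (n + 1 - 1) = n := by omega
    rw [hsimp] at hmeas
    have hqn : q ^ n = p * q ^ n + q ^ (n + 1) := by
      rw [pow_succ]
      linear_combination (-(q ^ n)) * hpq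
    have hgoal : ENNReal.ofReal (p * q ^ n) + ENNReal.ofReal (q ^ (n + 1))
        = ENNReal.ofReal (p * q ^ n) + μ {ω | n + 2 ≤ U t ω} := by
      rw [← ENNReal.ofReal_add (by positivity) (by positivity), ← hqn]
      exact hmeas
    have := ((ENNReal.add_right_inj ENNReal.ofReal_ne_top).1 hgoal).symm
    exact this

lemma coord_measure (hp : 0 ≤ p) (hq0 : 0 ≤ q) (hpq : p + q = 1)
    (hUm : ∀ s, Measurable (U s))
    (hU : ∀ s n, 1 ≤ n → μ {ω | U s ω = n} = ENNReal.ofReal (p * q ^ (n - 1)))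
    (hU0 : ∀ s, μ {ω | U s ω = 0} = 0)
    (t : ℕ) {M j : ℕ} (hM : 2 ≤ M) (hj : j ≤ M) :
    μ {ω | min (U t ω) M = j} = ENNReal.ofReal (PgfAux.wt p q M j) := by
  rcases Nat.eq_zero_or_pos j with hj0 | hj1
  · subst hj0
    have hset : {ω | min (U t ω) M = 0} = {ω | U t ω = 0} := by
      ext ω
      simp only [Set.mem_setOf_eq]
      omega
    rw [hset, hU0 t]
    simp [PgfAux.wt]
  · rcases lt_or_ge j M with hjM | hjM
    · have hset : {ω | min (U t ω) M = j} = {ω | U t ω = j} := by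
        ext ω
        simp only [Set.mem_setOf_eq]
        omega
      rw [hset, hU t j (by omega)]
      congr 1
      unfold PgfAux.wt
      rw [if_neg (by omega), if_pos hjM]
    · have hjM' : j = M := by omega
      subst hjM'
      have hset : {ω | min (U t ω) j = j} = {ω | (j - 1) + 1 ≤ U t ω} := by
        ext ω
        simp only [Set.mem_setOf_eq]
        omega
      rw [hset, tail_measure μ p q U hp hq0 hpq hUm hU hU0 t (j - 1)]
      congr 1
      unfold PgfAux.wt
      rw [if_neg (by omega), if_neg (by omega)]

lemma repr_lemma (z : ℝ)
    (hp : 0 ≤ p) (hq0 : 0 ≤ q) (hpq : p + q = 1)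
    (hUm : ∀ s, Measurable (U s))
    (hindep : iIndepFun U μ)
    (hU : ∀ s n, 1 ≤ n → μ {ω | U s ω = n} = ENNReal.ofReal (p * q ^ (n - 1)))
    (hU0 : ∀ s, μ {ω | U s ω = 0} = 0)
    (m M : ℕ) (hM : m + 2 ≤ M) :
    ∫ ω, z ^ (sInf {n | 1 ≤ n ∧ ∀ t ∈ Finset.range m, U t ω ≠ n}) ∂μ
      = PgfAux.S p q z m M := by
  classical
  have hM2 : 2 ≤ M := by omega
  set pf := Fintype.piFinset (fun _ : Fin m => Finset.range (M + 1)) with hpf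
  set Ev : (Fin m → ℕ) → Set Ω :=
    fun y => {ω | ∀ i : Fin m, min (U (i : ℕ) ω) M = y i} with hEv
  have hEvMeas : ∀ y, MeasurableSet (Ev y) := by
    intro y
    have hEq : Ev y = ⋂ i : Fin m, (fun ω => min (U (i : ℕ) ω) M) ⁻¹' {y i} := by
      ext ω
      simp [hEv, Set.mem_iInter]
    rw [hEq]
    exact MeasurableSet.iInter fun i =>
      ((measurable_of_countable (fun x : ℕ => min x M)).comp (hUm i))
        (measurableSet_singleton _)
  have hEvMeasure : ∀ y ∈ pf,
      μ (Ev y) = ∏ i : Fin m, ENNReal.ofReal (PgfAux.wt p q M (y i)) := by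
    intro y hy
    rw [Fintype.mem_piFinset] at hy
    set y' : ℕ → ℕ := fun t => if h : t < m then y ⟨t, h⟩ else 0 with hy'
    have hset : Ev y = ⋂ t ∈ Finset.range m, (U t ⁻¹' {x | min x M = y' t}) := by
      ext ω
      simp only [hEv, Set.mem_setOf_eq, Set.mem_iInter, Finset.mem_range, Set.mem_preimage]
      constructor
      · intro h t ht
        have h2 := h ⟨t, ht⟩
        simp only [hy', dif_pos ht]
        exact h2
      · intro h i
        have h2 := h i i.isLt
        simpa only [hy', dif_pos i.isLt] using h2
    rw [hset]
    rw [hindep.meas_biInter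
      (fun t _ => ⟨{x | min x M = y' t}, (Set.to_countable _).measurableSet, rfl⟩)]
    have hterm : ∀ t ∈ Finset.range m, μ (U t ⁻¹' {x | min x M = y' t})
        = ENNReal.ofReal (PgfAux.wt p q M (y' t)) := by
      intro t ht
      rw [Finset.mem_range] at ht
      have hle : y' t ≤ M := by
        have h2 := hy ⟨t, ht⟩
        rw [Finset.mem_range] at h2
        simp only [hy', dif_pos ht]
        omega
      exact coord_measure μ p q U hp hq0 hpq hUm hU hU0 t hM2 hle
    rw [Finset.prod_congr rfl hterm,
      ← Fin.prod_univ_eq_prod_range (fun t => ENNReal.ofReal (PgfAux.wt p q M (y' t))) m]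
    refine Finset.prod_congr rfl (fun i _ => ?_)
    congr 1
    simp only [hy', dif_pos i.isLt]
  have hYmem : ∀ ω, (fun i : Fin m => min (U (i : ℕ) ω) M) ∈ pf := by
    intro ω
    rw [Fintype.mem_piFinset]
    intro i
    rw [Finset.mem_range]
    omega
  have hpoint : ∀ ω, z ^ (sInf {n | 1 ≤ n ∧ ∀ t ∈ Finset.range m, U t ω ≠ n})
      = ∑ y ∈ pf, Set.indicator (Ev y) (fun _ => z ^ PgfAux.tauF y) ω := by
    intro ω
    have hsingle : ∑ y ∈ pf, Set.indicator (Ev y) (fun _ => z ^ PgfAux.tauF y) ω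
        = z ^ PgfAux.tauF (fun i : Fin m => min (U (i : ℕ) ω) M) := by
      rw [Finset.sum_eq_single_of_mem (fun i : Fin m => min (U (i : ℕ) ω) M) (hYmem ω)
        (fun y _ hne => Set.indicator_of_notMem
          (fun hmem => hne (funext fun i => (hmem i).symm)) _)]
      have hmem : ω ∈ Ev (fun i : Fin m => min (U (i : ℕ) ω) M) := by
        simp [hEv]
      exact Set.indicator_of_mem hmem _
    rw [hsingle]
    congr 1
    obtain ⟨n₀, hn1, hn2, hn3⟩ := PgfAux.exists_unhit (fun i : Fin m => U (i : ℕ) ω)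
    unfold PgfAux.tauF
    refine PgfAux.sInf_eq_of_agree
      (P := fun n => 1 ≤ n ∧ ∀ t ∈ Finset.range m, U t ω ≠ n)
      (Q := fun n => 1 ≤ n ∧ ∀ i : Fin m, min (U (i : ℕ) ω) M ≠ n) (n₀ := n₀) ?_ ?_ ?_
    · refine ⟨hn1, fun t ht => ?_⟩
      rw [Finset.mem_range] at ht
      exact hn3 ⟨t, ht⟩
    · refine ⟨hn1, fun i hmin => ?_⟩
      have h3 := hn3 i
      omega
    · intro n hn
      constructor
      · rintro ⟨h1, h2⟩
        refine ⟨h1, fun i hmin => ?_⟩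
        have h3 := h2 (i : ℕ) (Finset.mem_range.mpr i.isLt)
        omega
      · rintro ⟨h1, h2⟩
        refine ⟨h1, fun t ht => ?_⟩
        rw [Finset.mem_range] at ht
        have h3 := h2 ⟨t, ht⟩
        simp only at h3
        omega
  have hfun : (fun ω => z ^ (sInf {n | 1 ≤ n ∧ ∀ t ∈ Finset.range m, U t ω ≠ n}))
      = fun ω => ∑ y ∈ pf, Set.indicator (Ev y) (fun _ => z ^ PgfAux.tauF y) ω :=
    funext hpoint
  rw [hfun, MeasureTheory.integral_finset_sum pf
    (fun y _ => (MeasureTheory.integrable_const _).indicator (hEvMeas y))]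
  unfold PgfAux.S
  refine Finset.sum_congr rfl (fun y hy => ?_)
  rw [MeasureTheory.integral_indicator_const _ (hEvMeas y), measureReal_def, hEvMeasure y hy,
    ENNReal.toReal_prod]
  have : ∀ i : Fin m, (ENNReal.ofReal (PgfAux.wt p q M (y i))).toReal
      = PgfAux.wt p q M (y i) := fun i =>
    ENNReal.toReal_ofReal (PgfAux.wt_nonneg hp hq0 M (y i))
  rw [Finset.prod_congr rfl (fun i _ => this i)]
  rw [smul_eq_mul]

end Prob

/-- **The `θ = 1` case of the binomial functional equation.** Response times
`U 0, U 1, …` are i.i.d. `Geometric(p)` (`P(U s = n) = p q^{n-1}`, `q = 1 - p`).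
For a pool of `m` clients put `X m n = #{s < m : U s = n}`,
`T m = min {n ≥ 1 : X m n = 0}` and `g m = E[z^{T m}]` (so `g m = E[z^T | S₀ = m]`).
Then `g 0 = z` and, for `s ≥ 1`,
`g s = (z / (1 + z q^s)) (q^s + G_{s,q}(z))` where
`G_{s,q}(z) = ∑_{k=0}^s C(s,k) q^k (1-q)^{s-k} g k`. -/
theorem pgf_theta_one_equation
    {Ω : Type*} [MeasurableSpace Ω] (μ : Measure Ω) [IsProbabilityMeasure μ]
    (p : ℝ) (hp : 0 < p ∧ p < 1) (q : ℝ) (hq : q = 1 - p)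
    (U : ℕ → Ω → ℕ) (hUm : ∀ s, Measurable (U s))
    (hindep : iIndepFun U μ)
    (hU : ∀ s, ∀ n, 1 ≤ n → μ {ω | U s ω = n} = ENNReal.ofReal (p * q ^ (n - 1)))
    (hU0 : ∀ s, μ {ω | U s ω = 0} = 0)
    (X : ℕ → ℕ → Ω → ℕ)
    (hX : ∀ m n ω, X m n ω = ((Finset.range m).filter (fun s => U s ω = n)).card)
    (T : ℕ → Ω → ℕ) (hT : ∀ m ω, T m ω = sInf {n | 1 ≤ n ∧ X m n ω = 0})
    (z : ℝ) (hz : 0 ≤ z)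
    (g : ℕ → ℝ) (hg : ∀ m, g m = ∫ ω, z ^ (T m ω) ∂μ) :
    g 0 = z ∧
      ∀ s : ℕ, 1 ≤ s →
        g s = (z / (1 + z * q ^ s))
          * (q ^ s + ∑ k ∈ Finset.range (s + 1),
              (s.choose k : ℝ) * q ^ k * (1 - q) ^ (s - k) * g k) := by
  have hp0 : 0 ≤ p := le_of_lt hp.1
  have hq0 : 0 ≤ q := by rw [hq]; linarith [hp.2]
  have hpq : p + q = 1 := by rw [hq]; ring
  have hTeq : ∀ m ω, T m ω = sInf {n | 1 ≤ n ∧ ∀ t ∈ Finset.range m, U t ω ≠ n} := by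
    intro m ω
    rw [hT]
    congr 1
    ext n
    simp only [Set.mem_setOf_eq, hX]
    constructor
    · rintro ⟨h1, h2⟩
      refine ⟨h1, fun t ht hc => ?_⟩
      rw [Finset.card_eq_zero, Finset.filter_eq_empty_iff] at h2
      exact h2 ht hc
    · rintro ⟨h1, h2⟩
      refine ⟨h1, ?_⟩
      rw [Finset.card_eq_zero, Finset.filter_eq_empty_iff]
      exact fun t ht => h2 t ht
  have hgS : ∀ m M, m + 2 ≤ M → g m = PgfAux.S p q z m M := by
    intro m M hM
    have heq : ∫ ω, z ^ (T m ω) ∂μ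
        = ∫ ω, z ^ (sInf {n | 1 ≤ n ∧ ∀ t ∈ Finset.range m, U t ω ≠ n}) ∂μ := by
      refine integral_congr_ae (Filter.Eventually.of_forall fun ω => ?_)
      show z ^ T m ω = z ^ sInf {n | 1 ≤ n ∧ ∀ t ∈ Finset.range m, U t ω ≠ n}
      rw [hTeq m ω]
    rw [hg m, heq, repr_lemma μ p q U z hp0 hq0 hpq hUm hindep hU hU0 m M hM]
  have hg0 : g 0 = z := by
    have heq : ∀ ω : Ω, z ^ (T 0 ω) = z := by
      intro ω
      rw [hTeq 0 ω]
      have hset : {n | 1 ≤ n ∧ ∀ t ∈ Finset.range 0, U t ω ≠ n} = {n | 1 ≤ n} := by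
        ext n; simp
      rw [hset]
      have h1 : sInf {n | 1 ≤ n} = 1 :=
        le_antisymm (Nat.sInf_le (by simp)) (le_csInf ⟨1, by simp⟩ (fun n hn => hn))
      rw [h1, pow_one]
    have heq2 : ∫ ω, z ^ (T 0 ω) ∂μ = ∫ _ω, z ∂μ :=
      integral_congr_ae (Filter.Eventually.of_forall heq)
    rw [hg 0, heq2]
    simp
  refine ⟨hg0, fun s hs => ?_⟩
  have hrec : g s = z * q ^ s + z * ∑ k ∈ Finset.range s,
      (s.choose k : ℝ) * q ^ k * p ^ (s - k) * g k := by
    have h1 : g s = PgfAux.S p q z s (s + 3) := hgS s (s + 3) (by omega)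
    have h2 := PgfAux.recursionS (p := p) (q := q) (z := z) hq (s := s) (M := s + 3)
      hs (by omega)
    rw [h1, h2]
    congr 1
    congr 1
    refine Finset.sum_congr rfl (fun k hk => ?_)
    rw [Finset.mem_range] at hk
    rw [← hgS k (s + 3 - 1) (by omega)]
  have hone : (1 : ℝ) - q = p := by rw [hq]; ring
  have hden : (0 : ℝ) < 1 + z * q ^ s := by positivity
  rw [div_mul_eq_mul_div, eq_div_iff (ne_of_gt hden)]
  have hsum1 : ∑ k ∈ Finset.range (s + 1), (s.choose k : ℝ) * q ^ k * (1 - q) ^ (s - k) * g k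
      = (∑ k ∈ Finset.range s, (s.choose k : ℝ) * q ^ k * p ^ (s - k) * g k)
        + q ^ s * g s := by
    rw [Finset.sum_range_succ, Nat.choose_self, Nat.sub_self]
    simp only [hone]
    push_cast
    ring
  rw [hsum1]
  linear_combination hrec
end

section
/- If U_1 ~ Geometric(p) and S_0 ~ Binomial(s, θ), then E[Y] = sθ(1 - G_{s-1,θ}(q)), where q = 1 - p and G_{s-1,θ} is the p.g.f. of T for a Binomial(s-1, θ) prior. -/
open MeasureTheory ProbabilityTheory
open scoped ENNReal NNReal

set_option linter.unusedSectionVars false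
set_option maxHeartbeats 1000000

namespace EYBP
variable {Ω : Type*} [MeasurableSpace Ω]


def cnt (U : ℕ → Ω → ℕ) (I : Finset ℕ) (n : ℕ) (ω : Ω) : ℕ :=
  (I.filter fun t => U t ω = n).card

noncomputable def TI (U : ℕ → Ω → ℕ) (I : Finset ℕ) (ω : Ω) : ℕ :=
  sInf {n | 1 ≤ n ∧ cnt U I n ω = 0}

lemma cnt_eq_zero {U : ℕ → Ω → ℕ} {I : Finset ℕ} {n : ℕ} {ω : Ω} :
    cnt U I n ω = 0 ↔ ∀ r ∈ I, U r ω ≠ n := by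
  simp [cnt, Finset.card_eq_zero, Finset.filter_eq_empty_iff]

lemma exists_gap (U : ℕ → Ω → ℕ) (I : Finset ℕ) (ω : Ω) :
    ∃ n, (1 ≤ n ∧ cnt U I n ω = 0) ∧ n ≤ I.card + 1 := by
  by_contra h
  push_neg at h
  have h' : ∀ n ∈ Finset.Icc 1 (I.card + 1), (I.filter fun t => U t ω = n).Nonempty := by
    intro n hn
    rw [Finset.mem_Icc] at hn
    rcases Nat.eq_zero_or_pos (cnt U I n ω) with h0 | hpos
    · exact absurd (h n ⟨hn.1, h0⟩) (by omega)
    · exact Finset.card_pos.mp hpos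
  classical
  set f : ℕ → ℕ := fun n => if hn : n ∈ Finset.Icc 1 (I.card + 1) then (h' n hn).choose else 0
    with hf
  have hmap : ∀ n ∈ Finset.Icc 1 (I.card + 1), f n ∈ I := by
    intro n hn
    simp only [hf, dif_pos hn]
    exact (Finset.mem_filter.mp (h' n hn).choose_spec).1
  have hval : ∀ n ∈ Finset.Icc 1 (I.card + 1), U (f n) ω = n := by
    intro n hn
    simp only [hf, dif_pos hn]
    exact (Finset.mem_filter.mp (h' n hn).choose_spec).2
  have hcard : I.card < (Finset.Icc 1 (I.card + 1)).card := by
    simp [Nat.card_Icc]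
  obtain ⟨x, hx, y, hy, hxy, heq⟩ :=
    Finset.exists_ne_map_eq_of_card_lt_of_maps_to hcard hmap
  have hx' := hval x hx
  have hy' := hval y hy
  rw [heq, hy'] at hx'
  exact hxy hx'.symm

lemma TI_mem (U : ℕ → Ω → ℕ) (I : Finset ℕ) (ω : Ω) :
    TI U I ω ∈ {n | 1 ≤ n ∧ cnt U I n ω = 0} := by
  obtain ⟨n, hn, _⟩ := exists_gap U I ω
  exact Nat.sInf_mem ⟨n, hn⟩

lemma TI_spec (U : ℕ → Ω → ℕ) (I : Finset ℕ) (ω : Ω) :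
    1 ≤ TI U I ω ∧ cnt U I (TI U I ω) ω = 0 := TI_mem U I ω

lemma TI_le (U : ℕ → Ω → ℕ) (I : Finset ℕ) (ω : Ω) : TI U I ω ≤ I.card + 1 := by
  obtain ⟨n, hn, hn'⟩ := exists_gap U I ω
  exact le_trans (Nat.sInf_le hn) hn'

lemma TI_le_of_gap {U : ℕ → Ω → ℕ} {I : Finset ℕ} {ω : Ω} {n : ℕ}
    (h1 : 1 ≤ n) (h0 : cnt U I n ω = 0) : TI U I ω ≤ n :=
  Nat.sInf_le ⟨h1, h0⟩

lemma cnt_ne_zero_of_lt_TI {U : ℕ → Ω → ℕ} {I : Finset ℕ} {ω : Ω} {n : ℕ}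
    (h1 : 1 ≤ n) (h2 : n < TI U I ω) : cnt U I n ω ≠ 0 := by
  intro h0
  exact absurd (TI_le_of_gap h1 h0) (by omega)

lemma TI_eq_iff {U : ℕ → Ω → ℕ} {I : Finset ℕ} {ω : Ω} {j : ℕ} :
    TI U I ω = j ↔ (1 ≤ j ∧ cnt U I j ω = 0 ∧ ∀ n, 1 ≤ n → n < j → cnt U I n ω ≠ 0) := by
  constructor
  · rintro rfl
    exact ⟨(TI_spec U I ω).1, (TI_spec U I ω).2, fun n h1 h2 => cnt_ne_zero_of_lt_TI h1 h2⟩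
  · rintro ⟨h1, h2, h3⟩
    have hle : TI U I ω ≤ j := TI_le_of_gap h1 h2
    rcases lt_or_eq_of_le hle with h | h
    · exact absurd (TI_spec U I ω).2 (h3 _ (TI_spec U I ω).1 h)
    · exact h

/-- Key swap: for `t ∈ I` with `U t ω ≥ 1`,
`U t ω < TI I` iff `U t ω ≤ TI (I.erase t)`. -/
lemma key_equiv {U : ℕ → Ω → ℕ} {I : Finset ℕ} {t : ℕ} (ht : t ∈ I) {ω : Ω}
    (h1 : 1 ≤ U t ω) :
    (U t ω < TI U I ω ↔ U t ω ≤ TI U (I.erase t) ω) := by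
  constructor
  · intro h
    by_contra hc
    push_neg at hc
    set j := TI U (I.erase t) ω with hj
    have hjs := TI_spec U (I.erase t) ω
    have hcntI : cnt U I j ω = 0 := by
      rw [cnt_eq_zero]
      intro r hr
      rcases eq_or_ne r t with rfl | hrt
      · omega
      · exact cnt_eq_zero.mp hjs.2 r (Finset.mem_erase.mpr ⟨hrt, hr⟩)
    have := TI_le_of_gap hjs.1 hcntI
    omega
  · intro h
    by_contra hc
    push_neg at hc
    set j := TI U I ω with hj
    have hjs := TI_spec U I ω
    have hUtj : U t ω ≠ j := fun he =>
      cnt_eq_zero.mp hjs.2 t ht he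
    have hcntJ : cnt U (I.erase t) j ω = 0 := by
      rw [cnt_eq_zero]
      intro r hr
      exact cnt_eq_zero.mp hjs.2 r (Finset.mem_of_mem_erase hr)
    have := TI_le_of_gap hjs.1 hcntJ
    omega

/-- counting identity -/
lemma sum_cnt_eq {U : ℕ → Ω → ℕ} {I : Finset ℕ} {ω : Ω} :
    ∑ n ∈ Finset.Ico 1 (TI U I ω), cnt U I n ω
      = (I.filter fun t => 1 ≤ U t ω ∧ U t ω < TI U I ω).card := by
  classical
  simp only [cnt]
  rw [← Finset.card_biUnion]
  · congr 1
    ext r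
    simp only [Finset.mem_biUnion, Finset.mem_filter, Finset.mem_Ico]
    constructor
    · rintro ⟨n, hn, hr, rfl⟩
      exact ⟨hr, hn.1, hn.2⟩
    · rintro ⟨hr, h1, h2⟩
      exact ⟨U r ω, ⟨h1, h2⟩, hr, rfl⟩
  · intro a _ b _ hab
    simp only [Finset.disjoint_left, Finset.mem_filter]
    rintro x ⟨_, rfl⟩ ⟨_, h⟩
    exact hab h

lemma measurable_cnt {U : ℕ → Ω → ℕ} (hUm : ∀ t, Measurable (U t))
    (I : Finset ℕ) (n : ℕ) : Measurable (cnt U I n) := by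
  classical
  have : cnt U I n = fun ω => ∑ r ∈ I, if U r ω = n then 1 else 0 := by
    funext ω
    exact Finset.card_filter _ _
  rw [this]
  exact Finset.measurable_sum _ fun r _ =>
    Measurable.ite ((hUm r) (MeasurableSet.singleton n)) measurable_const measurable_const

lemma measurable_TI {U : ℕ → Ω → ℕ} (hUm : ∀ t, Measurable (U t))
    (I : Finset ℕ) : Measurable (TI U I) := by
  apply measurable_to_countable'
  intro j
  have : TI U I ⁻¹' {j} = {ω | 1 ≤ j ∧ cnt U I j ω = 0 ∧ ∀ n, 1 ≤ n → n < j → cnt U I n ω ≠ 0} := by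
    ext ω; simp only [Set.mem_preimage, Set.mem_singleton_iff, Set.mem_setOf_eq, TI_eq_iff]
  rw [this]
  by_cases hj : 1 ≤ j
  · have : {ω | 1 ≤ j ∧ cnt U I j ω = 0 ∧ ∀ n, 1 ≤ n → n < j → cnt U I n ω ≠ 0}
        = (cnt U I j ⁻¹' {0}) ∩ ⋂ n ∈ Finset.Ico 1 j, (cnt U I n ⁻¹' {0})ᶜ := by
      ext ω
      simp only [Set.mem_setOf_eq, Set.mem_inter_iff, Set.mem_preimage, Set.mem_singleton_iff,
        Set.mem_iInter, Finset.mem_Ico, Set.mem_compl_iff]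
      constructor
      · rintro ⟨_, h2, h3⟩; exact ⟨h2, fun n hn => h3 n hn.1 hn.2⟩
      · rintro ⟨h2, h3⟩; exact ⟨hj, h2, fun n h1 h2' => h3 n ⟨h1, h2'⟩⟩
    rw [this]
    exact ((measurable_cnt hUm I j) (MeasurableSet.singleton 0)).inter
      (MeasurableSet.biInter (Finset.Ico 1 j).countable_toSet fun n _ =>
        ((measurable_cnt hUm I n) (MeasurableSet.singleton 0)).compl)
  · have : {ω | 1 ≤ j ∧ cnt U I j ω = 0 ∧ ∀ n, 1 ≤ n → n < j → cnt U I n ω ≠ 0} = ∅ := by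
      ext ω; simp only [Set.mem_setOf_eq, Set.mem_empty_iff_false, iff_false]
      rintro ⟨h, _, _⟩; exact hj h
    rw [this]; exact MeasurableSet.empty

lemma measN (A : Set ℕ) : MeasurableSet A := A.to_countable.measurableSet

lemma marginal_eq {μ : Measure Ω} {U : ℕ → Ω → ℕ} (hUm : ∀ t, Measurable (U t)) {p q : ℝ}
    (hU : ∀ t, ∀ n, 1 ≤ n → μ {ω | U t ω = n} = ENNReal.ofReal (p * q ^ (n - 1)))
    (hU0 : ∀ t, μ {ω | U t ω = 0} = 0)
    (r : ℕ) (A : Set ℕ) : μ (U r ⁻¹' A) = μ (U 0 ⁻¹' A) := by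
  have key : ∀ (r' : ℕ), μ (U r' ⁻¹' A) = ∑' n : A, μ (U r' ⁻¹' {(n : ℕ)}) := by
    intro r'
    have hA : U r' ⁻¹' A = ⋃ n ∈ A, U r' ⁻¹' {n} := by ext ω; simp
    rw [hA, measure_biUnion A.to_countable]
    · intro a _ b hb hab
      simp only [Function.onFun, Set.disjoint_left, Set.mem_preimage, Set.mem_singleton_iff]
      intro x hxa hxb; exact hab (hxa.symm.trans hxb)
    · intro n _; exact (hUm r') (measN {n})
  rw [key r, key 0]
  congr 1
  funext n
  have h1 : ∀ r', U r' ⁻¹' {(n:ℕ)} = {ω | U r' ω = (n:ℕ)} := fun _ => rfl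
  rcases Nat.eq_zero_or_pos (n : ℕ) with h0 | hpos
  · rw [h1, h1, h0, hU0, hU0]
  · rw [h1, h1, hU r _ hpos, hU 0 _ hpos]

section Pattern

/-- truncation pattern -/
def pt (j x : ℕ) : ℕ := min x (j + 1)

lemma pt_eq_iff {j n : ℕ} (hn : n ≤ j) (x : ℕ) : pt j x = n ↔ x = n := by
  unfold pt; omega

lemma pt_lt (j x : ℕ) : pt j x < j + 2 := by unfold pt; omega

/-- marginal truncated law -/
noncomputable def rho (μ : Measure Ω) (U : ℕ → Ω → ℕ) (j n : ℕ) : ℝ≥0∞ :=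
  μ {ω | pt j (U 0 ω) = n}

/-- admissible patterns: cover `[1, j)`, avoid `j` -/
def Good (J : Finset ℕ) (j : ℕ) (v : ↥J → Fin (j + 2)) : Prop :=
  (∀ r, (v r : ℕ) ≠ j) ∧ ∀ n, 1 ≤ n → n < j → ∃ r, (v r : ℕ) = n

open Classical in
noncomputable def patSum (μ : Measure Ω) (U : ℕ → Ω → ℕ) (J : Finset ℕ) (j : ℕ) : ℝ≥0∞ :=
  ∑ v : ↥J → Fin (j + 2), if Good J j v then ∏ r, rho μ U j (v r) else 0

/-- the observed pattern -/
def obs (U : ℕ → Ω → ℕ) (J : Finset ℕ) (j : ℕ) (ω : Ω) : ↥J → Fin (j + 2) :=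
  fun r => ⟨pt j (U r ω), pt_lt j _⟩

lemma TI_eq_iff_good {U : ℕ → Ω → ℕ} {J : Finset ℕ} {j : ℕ} (hj : 1 ≤ j) (ω : Ω) :
    TI U J ω = j ↔ Good J j (obs U J j ω) := by
  rw [TI_eq_iff]
  constructor
  · rintro ⟨-, h2, h3⟩
    constructor
    · rintro r hr
      have : U (r : ℕ) ω = j := (pt_eq_iff le_rfl _).mp hr
      exact cnt_eq_zero.mp h2 r r.2 this
    · intro n h1 h2'
      have := h3 n h1 h2'
      rw [Ne, cnt_eq_zero] at this
      push_neg at this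
      obtain ⟨r, hr, hrn⟩ := this
      exact ⟨⟨r, hr⟩, (pt_eq_iff (le_of_lt h2') _).mpr hrn⟩
  · rintro ⟨h2, h3⟩
    refine ⟨hj, ?_, ?_⟩
    · rw [cnt_eq_zero]
      intro r hr hrj
      exact h2 ⟨r, hr⟩ ((pt_eq_iff le_rfl _).mpr hrj)
    · intro n h1 h2'
      obtain ⟨r, hr⟩ := h3 n h1 h2'
      rw [Ne, cnt_eq_zero]
      push_neg
      exact ⟨r, r.2, (pt_eq_iff (le_of_lt h2') _).mp hr⟩

open Classical in
/-- decomposition of `W ∩ {TI = j}` into pattern events -/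
lemma meas_inter_TI_eq {μ : Measure Ω} {U : ℕ → Ω → ℕ} (hUm : ∀ t, Measurable (U t))
    {J : Finset ℕ} {j : ℕ} (hj : 1 ≤ j) (W : Set Ω) (hW : MeasurableSet W) :
    μ (W ∩ {ω | TI U J ω = j})
      = ∑ v : ↥J → Fin (j + 2), if Good J j v
          then μ (W ∩ ⋂ r : ↥J, {ω | pt j (U (r : ℕ) ω) = (v r : ℕ)}) else 0 := by
  have hset : W ∩ {ω | TI U J ω = j}
      = ⋃ v ∈ Finset.univ.filter (fun v : ↥J → Fin (j+2) => Good J j v),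
          W ∩ ⋂ r : ↥J, {ω | pt j (U (r : ℕ) ω) = (v r : ℕ)} := by
    ext ω
    simp only [Set.mem_inter_iff, Set.mem_setOf_eq, Set.mem_iUnion, Finset.mem_filter,
      Finset.mem_univ, true_and, Set.mem_iInter, exists_prop]
    constructor
    · rintro ⟨hw, hTI⟩
      refine ⟨obs U J j ω, (TI_eq_iff_good hj ω).mp hTI, hw, fun r => rfl⟩
    · rintro ⟨v, hv, hw, hvr⟩
      have : obs U J j ω = v := by
        funext r; exact Fin.ext (hvr r)
      refine ⟨hw, (TI_eq_iff_good hj ω).mpr (this ▸ hv)⟩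
  rw [hset, measure_biUnion_finset, Finset.sum_filter]
  · intro a ha b hb hab
    simp only [Set.disjoint_left, Set.mem_inter_iff, Set.mem_iInter, Set.mem_setOf_eq]
    rintro ω ⟨-, hva⟩ ⟨-, hvb⟩
    exact hab (by funext r; exact Fin.ext ((hva r).symm.trans (hvb r)))
  · intro v _
    exact hW.inter (MeasurableSet.iInter fun r => (hUm (r:ℕ)) (measN {x | pt j x = (v r : ℕ)}))

end Pattern
section Indep
variable {μ : Measure Ω} {S0 : Ω → ℕ} {U : ℕ → Ω → ℕ} {p q : ℝ}
  (hindep : iIndepFun (fun o : Option ℕ => o.elim S0 U) μ)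
  (hUm : ∀ t, Measurable (U t))
  (hU : ∀ t, ∀ n, 1 ≤ n → μ {ω | U t ω = n} = ENNReal.ofReal (p * q ^ (n - 1)))
  (hU0 : ∀ t, μ {ω | U t ω = 0} = 0)

def someEmb : ℕ ↪ Option ℕ := ⟨some, Option.some_injective ℕ⟩

include hindep hUm hU hU0 in
lemma meas_pattern {J : Finset ℕ} {j : ℕ} (v : ↥J → Fin (j + 2)) :
    μ (⋂ r : ↥J, {ω | pt j (U (r : ℕ) ω) = (v r : ℕ)}) = ∏ r : ↥J, rho μ U j (v r) := by
  classical
  set F : Option ℕ → Ω → ℕ := fun o => o.elim S0 U with hF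
  set g : ℕ → ℕ := fun r => if h : r ∈ J then (v ⟨r, h⟩ : ℕ) else 0 with hg
  set B : Option ℕ → Set ℕ := fun o => o.elim Set.univ (fun r => {x | pt j x = g r}) with hB
  have key := hindep.measure_inter_preimage_eq_mul (J.map someEmb) (sets := B)
    (fun i _ => measN _)
  have hset : (⋂ i ∈ J.map someEmb, F i ⁻¹' B i)
      = ⋂ r : ↥J, {ω | pt j (U (r : ℕ) ω) = (v r : ℕ)} := by
    ext ω
    simp only [Set.mem_iInter, Finset.mem_map, someEmb, Function.Embedding.coeFn_mk]
    constructor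
    · rintro h ⟨r, hr⟩
      have := h (some r) ⟨r, hr, rfl⟩
      simpa [hB, hF, hg, dif_pos hr] using this
    · rintro h i ⟨r, hr, rfl⟩
      have := h ⟨r, hr⟩
      simpa [hB, hF, hg, dif_pos hr] using this
  rw [hset] at key
  rw [key, Finset.prod_map]
  rw [← Finset.prod_attach J fun r => μ (F (someEmb r) ⁻¹' B (someEmb r))]
  apply Finset.prod_congr rfl
  intro r _
  have h1 : F (someEmb (r : ℕ)) ⁻¹' B (someEmb (r : ℕ))
      = U (r : ℕ) ⁻¹' {x | pt j x = g (r : ℕ)} := rfl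
  rw [h1, marginal_eq hUm hU hU0]
  simp only [rho, hg, dif_pos r.2]
  rfl

include hindep hUm hU hU0 in
lemma meas_triple_pattern {J : Finset ℕ} {t m n j : ℕ} (ht : t ∉ J) (v : ↥J → Fin (j + 2)) :
    μ ({ω | S0 ω = m} ∩ {ω | U t ω = n} ∩ ⋂ r : ↥J, {ω | pt j (U (r : ℕ) ω) = (v r : ℕ)})
      = μ {ω | S0 ω = m} * μ {ω | U t ω = n} * ∏ r : ↥J, rho μ U j (v r) := by
  classical
  set F : Option ℕ → Ω → ℕ := fun o => o.elim S0 U with hF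
  set g : ℕ → ℕ := fun r => if h : r ∈ J then (v ⟨r, h⟩ : ℕ) else 0 with hg
  set B : Option ℕ → Set ℕ := fun o =>
    o.elim {m} (fun r => if r = t then {n} else {x | pt j x = g r}) with hB
  have htm : some t ∉ J.map someEmb := by
    simp [someEmb, ht]
  have hnm : none ∉ insert (some t) (J.map someEmb) := by
    simp [someEmb]
  have key := hindep.measure_inter_preimage_eq_mul
    (insert none (insert (some t) (J.map someEmb))) (sets := B) (fun i _ => measN _)
  have hset : (⋂ i ∈ insert none (insert (some t) (J.map someEmb)), F i ⁻¹' B i)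
      = {ω | S0 ω = m} ∩ {ω | U t ω = n} ∩ ⋂ r : ↥J, {ω | pt j (U (r : ℕ) ω) = (v r : ℕ)} := by
    rw [Finset.set_biInter_insert, Finset.set_biInter_insert]
    have h1 : F none ⁻¹' B none = {ω | S0 ω = m} := rfl
    have h2 : F (some t) ⁻¹' B (some t) = {ω | U t ω = n} := by
      simp only [hF, hB, Option.elim, if_pos rfl]; rfl
    have h3 : (⋂ i ∈ J.map someEmb, F i ⁻¹' B i)
        = ⋂ r : ↥J, {ω | pt j (U (r : ℕ) ω) = (v r : ℕ)} := by
      ext ω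
      simp only [Set.mem_iInter, Finset.mem_map, someEmb, Function.Embedding.coeFn_mk]
      constructor
      · rintro h ⟨r, hr⟩
        have hrt : r ≠ t := fun he => ht (he ▸ hr)
        have := h (some r) ⟨r, hr, rfl⟩
        simpa [hB, hF, hg, dif_pos hr, if_neg hrt] using this
      · rintro h i ⟨r, hr, rfl⟩
        have hrt : r ≠ t := fun he => ht (he ▸ hr)
        have := h ⟨r, hr⟩
        simpa [hB, hF, hg, dif_pos hr, if_neg hrt] using this
    rw [h1, h2, h3, Set.inter_assoc]
  rw [hset] at key
  rw [key, Finset.prod_insert hnm, Finset.prod_insert htm, Finset.prod_map, ← mul_assoc]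
  have h1 : F none ⁻¹' B none = {ω | S0 ω = m} := rfl
  have h2 : F (some t) ⁻¹' B (some t) = {ω | U t ω = n} := by
    simp only [hF, hB, Option.elim, if_pos rfl]; rfl
  rw [h1, h2]
  congr 1
  rw [← Finset.prod_attach J fun r => μ (F (someEmb r) ⁻¹' B (someEmb r))]
  apply Finset.prod_congr rfl
  intro r _
  have hrt : (r : ℕ) ≠ t := fun he => ht (he ▸ r.2)
  have h1 : F (someEmb (r : ℕ)) ⁻¹' B (someEmb (r : ℕ))
      = U (r : ℕ) ⁻¹' {x | pt j x = g (r : ℕ)} := by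
    simp only [hF, hB, someEmb, Function.Embedding.coeFn_mk, Option.elim, if_neg hrt]
  rw [h1, marginal_eq hUm hU hU0]
  simp only [rho, hg, dif_pos r.2]
  rfl

end Indep

lemma patSum_congr {μ : Measure Ω} {U : ℕ → Ω → ℕ} {J K : Finset ℕ} (h : J.card = K.card)
    (j : ℕ) : patSum μ U J j = patSum μ U K j := by
  classical
  have hc : Fintype.card ↥K = Fintype.card ↥J := by
    simp [Fintype.card_coe, h]
  set e : ↥K ≃ ↥J := Fintype.equivOfCardEq hc with he
  set E : (↥J → Fin (j + 2)) ≃ (↥K → Fin (j + 2)) :=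
    Equiv.arrowCongr e.symm (Equiv.refl _) with hE
  unfold patSum
  rw [← Equiv.sum_comp E (fun w => if Good K j w then ∏ r, rho μ U j (w r) else 0)]
  apply Finset.sum_congr rfl
  intro v _
  have hEv : ∀ r : ↥K, E v r = v (e r) := by
    intro r; simp [hE, Equiv.arrowCongr]
  have hgood : Good K j (E v) ↔ Good J j v := by
    constructor
    · rintro ⟨h1, h2⟩
      refine ⟨fun r => ?_, fun n hn1 hn2 => ?_⟩
      · have := h1 (e.symm r)
        rwa [hEv, e.apply_symm_apply] at this
      · obtain ⟨r, hr⟩ := h2 n hn1 hn2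
        rw [hEv] at hr
        exact ⟨e r, hr⟩
    · rintro ⟨h1, h2⟩
      refine ⟨fun r => ?_, fun n hn1 hn2 => ?_⟩
      · rw [hEv]; exact h1 _
      · obtain ⟨r, hr⟩ := h2 n hn1 hn2
        exact ⟨e.symm r, by rwa [hEv, e.apply_symm_apply]⟩
  by_cases hg : Good J j v
  · rw [if_pos (hgood.mpr hg), if_pos hg]
    calc (∏ r : ↥J, rho μ U j (v r : ℕ))
        = ∏ r : ↥K, rho μ U j (v (e r) : ℕ) :=
          (Equiv.prod_comp e (fun i : ↥J => rho μ U j (v i : ℕ))).symm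
      _ = ∏ r : ↥K, rho μ U j (E v r : ℕ) := by
          apply Finset.prod_congr rfl; intro r _; rw [hEv]
  · rw [if_neg hg, if_neg (fun hc' => hg (hgood.mp hc'))]


section Assembly
variable {μ : Measure Ω} {S0 : Ω → ℕ} {U : ℕ → Ω → ℕ} {p q : ℝ}
  (hindep : iIndepFun (fun o : Option ℕ => o.elim S0 U) μ)
  (hS0m : Measurable S0)
  (hUm : ∀ t, Measurable (U t))
  (hU : ∀ t, ∀ n, 1 ≤ n → μ {ω | U t ω = n} = ENNReal.ofReal (p * q ^ (n - 1)))
  (hU0 : ∀ t, μ {ω | U t ω = 0} = 0)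

include hindep hUm hU hU0 in
lemma meas_TI_eq_patSum {J : Finset ℕ} {j : ℕ} (hj : 1 ≤ j) :
    μ {ω | TI U J ω = j} = patSum μ U J j := by
  classical
  have h := meas_inter_TI_eq hUm hj Set.univ MeasurableSet.univ (μ := μ) (J := J)
  rw [Set.univ_inter] at h
  rw [h]
  unfold patSum
  apply Finset.sum_congr rfl
  intro v _
  by_cases hg : Good J j v <;>
    simp [hg, Set.univ_inter, meas_pattern hindep hUm hU hU0 v]

include hindep hS0m hUm hU hU0 in
lemma meas_triple {J : Finset ℕ} {t m n j : ℕ} (ht : t ∉ J) (hj : 1 ≤ j) :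
    μ ({ω | S0 ω = m} ∩ {ω | U t ω = n} ∩ {ω | TI U J ω = j})
      = μ {ω | S0 ω = m} * μ {ω | U t ω = n} * μ {ω | TI U J ω = j} := by
  classical
  have hW : MeasurableSet ({ω | S0 ω = m} ∩ {ω | U t ω = n}) :=
    (hS0m (measN {m})).inter ((hUm t) (measN {n}))
  have h := meas_inter_TI_eq hUm hj ({ω | S0 ω = m} ∩ {ω | U t ω = n}) hW (μ := μ) (J := J)
  rw [meas_TI_eq_patSum hindep hUm hU hU0 hj]
  unfold patSum
  rw [h, Finset.mul_sum]
  apply Finset.sum_congr rfl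
  intro v _
  by_cases hg : Good J j v <;>
    simp [hg, meas_triple_pattern hindep hUm hU hU0 ht v, mul_assoc]

end Assembly

lemma sum_geom {p q : ℝ} (hp : 0 < p ∧ p < 1) (hq : q = 1 - p) (j : ℕ) :
    ∑ n ∈ Finset.Icc 1 j, ENNReal.ofReal (p * q ^ (n - 1)) = ENNReal.ofReal (1 - q ^ j) := by
  have hq0 : 0 < q := by rw [hq]; linarith [hp.2]
  have hq1 : q < 1 := by rw [hq]; linarith [hp.1]
  obtain ⟨hp0, hp1⟩ := hp
  rw [← ENNReal.ofReal_sum_of_nonneg]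
  · congr 1
    rw [← Finset.Ico_add_one_right_eq_Icc, Finset.sum_Ico_eq_sum_range]
    have h1 : ∀ i ∈ Finset.range (j + 1 - 1), p * q ^ (1 + i - 1) = p * q ^ i := by
      intro i _
      have h2 : 1 + i - 1 = i := by omega
      rw [h2]
    rw [Finset.sum_congr rfl h1, ← Finset.mul_sum, geom_sum_eq (ne_of_lt hq1)]
    have : j + 1 - 1 = j := by omega
    rw [this]
    have hqne : q - 1 ≠ 0 := by intro h; apply absurd hq1; rw [show q = 1 by linarith]; simp
    field_simp
    subst hq
    ring
  · intro n _
    positivity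

section Assembly2
variable {μ : Measure Ω} [IsProbabilityMeasure μ] {S0 : Ω → ℕ} {U : ℕ → Ω → ℕ} {p q : ℝ}
  (hindep : iIndepFun (fun o : Option ℕ => o.elim S0 U) μ)
  (hS0m : Measurable S0)
  (hUm : ∀ t, Measurable (U t))
  (hp : 0 < p ∧ p < 1) (hq : q = 1 - p)
  (hU : ∀ t, ∀ n, 1 ≤ n → μ {ω | U t ω = n} = ENNReal.ofReal (p * q ^ (n - 1)))
  (hU0 : ∀ t, μ {ω | U t ω = 0} = 0)

include hindep hS0m hUm hp hq hU hU0 in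
lemma meas_A {m t : ℕ} (ht : t < m) :
    μ ({ω | S0 ω = m} ∩ {ω | 1 ≤ U t ω ∧ U t ω ≤ TI U ((Finset.range m).erase t) ω})
      = μ {ω | S0 ω = m} * ∑ j ∈ Finset.Icc 1 m,
          ENNReal.ofReal (1 - q ^ j) * μ {ω | TI U (Finset.range (m - 1)) ω = j} := by
  classical
  set J : Finset ℕ := (Finset.range m).erase t with hJ
  have htJ : t ∉ J := Finset.notMem_erase t _
  have hJcard : J.card = m - 1 := by
    rw [hJ, Finset.card_erase_of_mem (Finset.mem_range.mpr ht), Finset.card_range]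
  have hm : 1 ≤ m := Nat.one_le_iff_ne_zero.mpr (by omega)
  -- decompose the event
  have hdecomp : {ω | S0 ω = m} ∩ {ω | 1 ≤ U t ω ∧ U t ω ≤ TI U J ω}
      = ⋃ j ∈ Finset.Icc 1 m, ⋃ n ∈ Finset.Icc 1 j,
          ({ω | S0 ω = m} ∩ {ω | U t ω = n} ∩ {ω | TI U J ω = j}) := by
    ext ω
    simp only [Set.mem_inter_iff, Set.mem_setOf_eq, Set.mem_iUnion, Finset.mem_Icc, exists_prop]
    constructor
    · rintro ⟨h1, h2, h3⟩
      refine ⟨TI U J ω, ⟨(TI_spec U J ω).1, ?_⟩, U t ω, ⟨h2, h3⟩, ⟨h1, rfl⟩, rfl⟩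
      have := TI_le U J ω
      omega
    · rintro ⟨j, hj, n, hn, ⟨h1, h2⟩, h3⟩
      refine ⟨h1, ?_, ?_⟩ <;> omega
  rw [hdecomp, measure_biUnion_finset, Finset.mul_sum]
  · apply Finset.sum_congr rfl
    intro j hj
    rw [Finset.mem_Icc] at hj
    rw [measure_biUnion_finset]
    · have : ∀ n ∈ Finset.Icc 1 j,
          μ ({ω | S0 ω = m} ∩ {ω | U t ω = n} ∩ {ω | TI U J ω = j})
            = μ {ω | S0 ω = m} * μ {ω | U t ω = n} * μ {ω | TI U J ω = j} := by
        intro n hn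
        exact meas_triple hindep hS0m hUm hU hU0 htJ hj.1
      rw [Finset.sum_congr rfl this]
      have hTIcong : μ {ω | TI U J ω = j} = μ {ω | TI U (Finset.range (m - 1)) ω = j} := by
        rw [meas_TI_eq_patSum hindep hUm hU hU0 hj.1,
          meas_TI_eq_patSum hindep hUm hU hU0 hj.1,
          patSum_congr (show J.card = (Finset.range (m-1)).card by
            rw [hJcard, Finset.card_range])]
      have hUval : ∀ n ∈ Finset.Icc 1 j, μ {ω | U t ω = n} = ENNReal.ofReal (p * q ^ (n-1)) := by
        intro n hn
        exact hU t n (Finset.mem_Icc.mp hn).1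
      calc ∑ n ∈ Finset.Icc 1 j, μ {ω | S0 ω = m} * μ {ω | U t ω = n} * μ {ω | TI U J ω = j}
          = μ {ω | S0 ω = m} * ((∑ n ∈ Finset.Icc 1 j, μ {ω | U t ω = n})
              * μ {ω | TI U J ω = j}) := by
            rw [Finset.sum_mul, Finset.mul_sum]
            apply Finset.sum_congr rfl
            intro n _; ring
        _ = μ {ω | S0 ω = m} * (ENNReal.ofReal (1 - q ^ j)
              * μ {ω | TI U (Finset.range (m - 1)) ω = j}) := by
            rw [Finset.sum_congr rfl hUval, sum_geom hp hq, hTIcong]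
    · -- disjointness in n
      intro a _ b _ hab
      simp only [Set.disjoint_left, Set.mem_inter_iff, Set.mem_setOf_eq]
      rintro ω ⟨⟨-, h1⟩, -⟩ ⟨⟨-, h2⟩, -⟩
      exact hab (h1 ▸ h2 ▸ rfl)
    · intro n _
      exact ((hS0m (measN {m})).inter ((hUm t) (measN {n}))).inter
        ((measurable_TI hUm J) (measN {j}))
  · -- disjointness in j
    intro a _ b _ hab
    simp only [Set.disjoint_left, Set.mem_iUnion, Set.mem_inter_iff, Set.mem_setOf_eq,
      Finset.mem_Icc, exists_prop]
    rintro ω ⟨n, -, -, h1⟩ ⟨n', -, -, h2⟩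
    exact hab (h1 ▸ h2 ▸ rfl)
  · intro j _
    apply MeasurableSet.biUnion (Finset.Icc 1 j).countable_toSet
    intro n _
    exact ((hS0m (measN {m})).inter ((hUm t) (measN {n}))).inter
      ((measurable_TI hUm J) (measN {j}))

include hUm in
lemma partition_TI (k : ℕ) :
    ∑ j ∈ Finset.Icc 1 (k + 1), μ {ω | TI U (Finset.range k) ω = j} = 1 := by
  have huniv : (⋃ j ∈ Finset.Icc 1 (k + 1), {ω | TI U (Finset.range k) ω = j}) = Set.univ := by
    ext ω
    simp only [Set.mem_iUnion, Finset.mem_Icc, Set.mem_setOf_eq, Set.mem_univ, iff_true,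
      exists_prop]
    refine ⟨TI U (Finset.range k) ω, ⟨(TI_spec U _ ω).1, ?_⟩, rfl⟩
    have := TI_le U (Finset.range k) ω
    rw [Finset.card_range] at this
    omega
  rw [← measure_biUnion_finset]
  · rw [huniv, measure_univ]
  · intro a _ b _ hab
    simp only [Set.disjoint_left, Set.mem_setOf_eq]
    rintro ω h1 h2
    exact hab (h1 ▸ h2 ▸ rfl)
  · intro j _
    exact (measurable_TI hUm _) (measN {j})

end Assembly2

lemma integral_pow_TI {μ : Measure Ω} [IsProbabilityMeasure μ] {U : ℕ → Ω → ℕ}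
    (hUm : ∀ t, Measurable (U t)) (q : ℝ) (k : ℕ) :
    ∫ ω, q ^ (TI U (Finset.range k) ω) ∂μ
      = ∑ j ∈ Finset.Icc 1 (k + 1), (μ {ω | TI U (Finset.range k) ω = j}).toReal * q ^ j := by
  have hpt : (fun ω => q ^ (TI U (Finset.range k) ω))
      = fun ω => ∑ j ∈ Finset.Icc 1 (k + 1),
          ({ω' | TI U (Finset.range k) ω' = j}.indicator (fun _ => q ^ j) ω) := by
    funext ω
    have hmem : TI U (Finset.range k) ω ∈ Finset.Icc 1 (k + 1) := by
      rw [Finset.mem_Icc]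
      refine ⟨(TI_spec U _ ω).1, ?_⟩
      have := TI_le U (Finset.range k) ω
      rwa [Finset.card_range] at this
    calc q ^ (TI U (Finset.range k) ω)
        = ∑ j ∈ Finset.Icc 1 (k + 1),
            if TI U (Finset.range k) ω = j then q ^ j else 0 := by
          rw [Finset.sum_ite_eq, if_pos hmem]
      _ = _ := by
          apply Finset.sum_congr rfl
          intro j _
          simp only [Set.indicator_apply, Set.mem_setOf_eq]
  rw [hpt, integral_finset_sum]
  · apply Finset.sum_congr rfl
    intro j _
    have hms : MeasurableSet {ω' | TI U (Finset.range k) ω' = j} :=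
      (measurable_TI hUm (Finset.range k)) (measN {j})
    rw [integral_indicator_const _ hms, smul_eq_mul]; rfl
  · intro j _
    exact (integrable_const _).indicator ((measurable_TI hUm _) (measN {j}))

end EYBP

/-- **Expected yield under a binomial prior, geometric case.** Response times
`U 0, U 1, …` are i.i.d. `Geometric(p)` (`P(U s = n) = p q^{n-1}`, `q = 1 - p`),
independent of the pool size `S₀ ~ Binomial(s, θ)`.  For a pool of `m` clients,
`X m n = #{t < m : U t = n}` and `T m = min {n ≥ 1 : X m n = 0}`; the realized stopping
time is `T S₀` and the total yield is `Y = ∑_{n=1}^{T S₀ - 1} X S₀ n`.  Then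
`E[Y] = s θ (1 - G_{s-1,θ}(q))`, where
`G_{s-1,θ}(q) = ∑_{k=0}^{s-1} C(s-1,k) θ^k (1-θ)^{s-1-k} E[q^{T k}]`. -/
theorem expected_yield_binomial_prior
    {Ω : Type*} [MeasurableSpace Ω] (μ : Measure Ω) [IsProbabilityMeasure μ]
    (p : ℝ) (hp : 0 < p ∧ p < 1) (q : ℝ) (hq : q = 1 - p)
    (s : ℕ) (hs : 1 ≤ s) (θ : ℝ) (hθ : 0 ≤ θ ∧ θ ≤ 1)
    (S0 : Ω → ℕ) (U : ℕ → Ω → ℕ)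
    (hS0m : Measurable S0) (hUm : ∀ t, Measurable (U t))
    (hindep : iIndepFun (fun o : Option ℕ => o.elim S0 U) μ)
    (hS0 : ∀ k : ℕ, μ {ω | S0 ω = k}
        = ENNReal.ofReal ((s.choose k : ℝ) * θ ^ k * (1 - θ) ^ (s - k)))
    (hU : ∀ t, ∀ n, 1 ≤ n → μ {ω | U t ω = n} = ENNReal.ofReal (p * q ^ (n - 1)))
    (hU0 : ∀ t, μ {ω | U t ω = 0} = 0)
    (X : ℕ → ℕ → Ω → ℕ)
    (hX : ∀ m n ω, X m n ω = ((Finset.range m).filter (fun t => U t ω = n)).card)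
    (T : ℕ → Ω → ℕ) (hT : ∀ m ω, T m ω = sInf {n | 1 ≤ n ∧ X m n ω = 0})
    (Y : Ω → ℕ)
    (hY : ∀ ω, Y ω = ∑ n ∈ Finset.Ico 1 (T (S0 ω) ω), X (S0 ω) n ω) :
    ∫ ω, (Y ω : ℝ) ∂μ
      = s * θ * (1 - ∑ k ∈ Finset.range s,
          ((s - 1).choose k : ℝ) * θ ^ k * (1 - θ) ^ (s - 1 - k)
            * ∫ ω, q ^ (T k ω) ∂μ) := by
  classical
  have hq0 : 0 < q := by rw [hq]; linarith [hp.2]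
  have hq1 : q < 1 := by rw [hq]; linarith [hp.1]
  -- identification of X and T with the abstract cnt / TI
  have hXc : ∀ m n ω, X m n ω = EYBP.cnt U (Finset.range m) n ω := hX
  have hTT : ∀ k ω, T k ω = EYBP.TI U (Finset.range k) ω := by
    intro k ω
    rw [hT]
    unfold EYBP.TI
    congr 1
    ext n
    simp only [Set.mem_setOf_eq, hXc]
  -- the events
  set A : ℕ → ℕ → Set Ω := fun m t =>
    {ω | S0 ω = m} ∩ {ω | 1 ≤ U t ω ∧ U t ω ≤ EYBP.TI U ((Finset.range m).erase t) ω}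
    with hA
  have hAmeas : ∀ m t, MeasurableSet (A m t) := by
    intro m t
    apply ((hS0m (EYBP.measN {m})).inter)
    have h1 : MeasurableSet {ω | 1 ≤ U t ω} := (hUm t) (EYBP.measN {x | 1 ≤ x})
    have h2 : MeasurableSet {ω | U t ω ≤ EYBP.TI U ((Finset.range m).erase t) ω} := by
      have hpair : Measurable fun ω =>
          (U t ω, EYBP.TI U ((Finset.range m).erase t) ω) :=
        (hUm t).prodMk (EYBP.measurable_TI hUm _)
      exact hpair ((Set.to_countable {x : ℕ × ℕ | x.1 ≤ x.2}).measurableSet)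
    have : {ω | 1 ≤ U t ω ∧ U t ω ≤ EYBP.TI U ((Finset.range m).erase t) ω}
        = {ω | 1 ≤ U t ω} ∩ {ω | U t ω ≤ EYBP.TI U ((Finset.range m).erase t) ω} := rfl
    rw [this]
    exact h1.inter h2
  -- a.e. facts
  have hae1 : ∀ᵐ ω ∂μ, ∀ t, U t ω ≠ 0 := by
    rw [ae_iff]
    have hset : {ω | ¬ ∀ t, U t ω ≠ 0} = ⋃ t, {ω | U t ω = 0} := by
      ext ω; simp
    rw [hset]
    exact measure_iUnion_null fun t => hU0 t
  have hae2 : ∀ᵐ ω ∂μ, S0 ω ≤ s := by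
    rw [ae_iff]
    have hset : {ω | ¬ S0 ω ≤ s} = ⋃ k : ℕ, {ω | S0 ω = s + 1 + k} := by
      ext ω
      simp only [Set.mem_setOf_eq, not_le, Set.mem_iUnion]
      constructor
      · intro h; exact ⟨S0 ω - s - 1, by omega⟩
      · rintro ⟨k, hk⟩; omega
    rw [hset]
    apply measure_iUnion_null
    intro k
    rw [hS0 (s + 1 + k), Nat.choose_eq_zero_of_lt (by omega)]
    simp
  -- pointwise identity a.e.
  have hae : (fun ω => (Y ω : ℝ)) =ᵐ[μ] fun ω =>
      ∑ m ∈ Finset.Icc 1 s, ∑ t ∈ Finset.range m,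
        (A m t).indicator (fun _ => (1 : ℝ)) ω := by
    filter_upwards [hae1, hae2] with ω hω1 hω2
    rcases Nat.eq_zero_or_pos (S0 ω) with h0 | hpos
    · -- S0 ω = 0 : both sides vanish
      have hY0 : Y ω = 0 := by
        rw [hY]
        apply Finset.sum_eq_zero
        intro n _
        rw [hXc, h0]
        simp [EYBP.cnt]
      rw [hY0]
      symm
      simp only [Nat.cast_zero]
      apply Finset.sum_eq_zero
      intro m hm
      apply Finset.sum_eq_zero
      intro t _
      apply Set.indicator_of_notMem
      rw [hA]
      rintro ⟨h1, -⟩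
      rw [Finset.mem_Icc] at hm
      simp only [Set.mem_setOf_eq] at h1
      omega
    · set m₀ := S0 ω with hm₀
      have hmem : m₀ ∈ Finset.Icc 1 s := Finset.mem_Icc.mpr ⟨hpos, hω2⟩
      rw [Finset.sum_eq_single m₀]
      · -- main term
        have hYval : Y ω
            = (((Finset.range m₀).filter fun t =>
                1 ≤ U t ω ∧ U t ω < EYBP.TI U (Finset.range m₀) ω).card) := by
          rw [hY, ← EYBP.sum_cnt_eq]
          apply Finset.sum_congr
          · congr 1
            exact hTT m₀ ω
          · intro n _
            exact hXc m₀ n ω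
        rw [hYval, Finset.card_filter]
        push_cast
        apply Finset.sum_congr rfl
        intro t ht
        have hkey := EYBP.key_equiv (U := U) (I := Finset.range m₀) (t := t) ht
          (Nat.one_le_iff_ne_zero.mpr (hω1 t)) (ω := ω)
        have h1U : 1 ≤ U t ω := Nat.one_le_iff_ne_zero.mpr (hω1 t)
        by_cases hc : U t ω < EYBP.TI U (Finset.range m₀) ω
        · rw [if_pos ⟨h1U, hc⟩, Set.indicator_of_mem]
          exact ⟨rfl, h1U, hkey.mp hc⟩
        · rw [if_neg (fun hx => hc hx.2), Set.indicator_of_notMem]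
          rintro ⟨-, -, h2⟩
          exact hc (hkey.mpr h2)
      · intro m _ hne
        apply Finset.sum_eq_zero
        intro t _
        apply Set.indicator_of_notMem
        rintro ⟨h1, -⟩
        simp only [Set.mem_setOf_eq] at h1
        exact hne (by rw [← h1])
      · intro habs
        exact absurd hmem habs
  -- integrate
  rw [integral_congr_ae hae]
  rw [integral_finset_sum _ (fun m _ => integrable_finset_sum _
    (fun t _ => (integrable_const (1 : ℝ)).indicator (hAmeas m t)))]
  have hint : ∀ m ∈ Finset.Icc 1 s,
      (∫ ω, ∑ t ∈ Finset.range m, (A m t).indicator (fun _ => (1:ℝ)) ω ∂μ)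
        = ∑ t ∈ Finset.range m, ((μ (A m t)).toReal) := by
    intro m _
    rw [integral_finset_sum _ (fun t _ => (integrable_const (1 : ℝ)).indicator (hAmeas m t))]
    apply Finset.sum_congr rfl
    intro t _
    rw [integral_indicator_const _ (hAmeas m t), smul_eq_mul, mul_one]; rfl
  rw [Finset.sum_congr rfl hint]
  -- evaluate μ (A m t)
  have hAval : ∀ m ∈ Finset.Icc 1 s, ∀ t ∈ Finset.range m,
      (μ (A m t)).toReal
        = ((s.choose m : ℝ) * θ ^ m * (1 - θ) ^ (s - m))
            * (1 - ∫ ω, q ^ (T (m - 1) ω) ∂μ) := by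
    intro m hm t ht
    rw [Finset.mem_Icc] at hm
    rw [Finset.mem_range] at ht
    have hmA := EYBP.meas_A hindep hS0m hUm hp hq hU hU0 ht (μ := μ)
    rw [hA]
    rw [hmA, ENNReal.toReal_mul]
    have hPm : (μ {ω | S0 ω = m}).toReal
        = (s.choose m : ℝ) * θ ^ m * (1 - θ) ^ (s - m) := by
      rw [hS0 m, ENNReal.toReal_ofReal]
      exact mul_nonneg (mul_nonneg (Nat.cast_nonneg _) (pow_nonneg hθ.1 _))
        (pow_nonneg (by linarith [hθ.2]) _)
    rw [hPm]
    congr 1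
    -- the j-sum
    have hfin : ∀ j ∈ Finset.Icc 1 m,
        (ENNReal.ofReal (1 - q ^ j) * μ {ω | EYBP.TI U (Finset.range (m - 1)) ω = j}) ≠ ∞ :=
      fun j _ => ENNReal.mul_ne_top ENNReal.ofReal_ne_top (measure_ne_top μ _)
    rw [ENNReal.toReal_sum hfin]
    have hterm : ∀ j ∈ Finset.Icc 1 m,
        (ENNReal.ofReal (1 - q ^ j)
            * μ {ω | EYBP.TI U (Finset.range (m - 1)) ω = j}).toReal
          = (1 - q ^ j) * (μ {ω | EYBP.TI U (Finset.range (m - 1)) ω = j}).toReal := by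
      intro j _
      rw [ENNReal.toReal_mul, ENNReal.toReal_ofReal]
      have : q ^ j ≤ 1 := pow_le_one₀ hq0.le hq1.le
      linarith
    rw [Finset.sum_congr rfl hterm]
    have hsplit : ∀ j ∈ Finset.Icc 1 m,
        (1 - q ^ j) * (μ {ω | EYBP.TI U (Finset.range (m - 1)) ω = j}).toReal
          = (μ {ω | EYBP.TI U (Finset.range (m - 1)) ω = j}).toReal
            - (μ {ω | EYBP.TI U (Finset.range (m - 1)) ω = j}).toReal * q ^ j := by
      intro j _; ring
    rw [Finset.sum_congr rfl hsplit, Finset.sum_sub_distrib]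
    have hone : ∑ j ∈ Finset.Icc 1 m,
        (μ {ω | EYBP.TI U (Finset.range (m - 1)) ω = j}).toReal = 1 := by
      have hp1 := EYBP.partition_TI hUm (m - 1) (μ := μ)
      rw [show m - 1 + 1 = m by omega] at hp1
      have := congrArg ENNReal.toReal hp1
      rwa [ENNReal.toReal_sum (fun j _ => measure_ne_top μ _), ENNReal.toReal_one] at this
    have hInt : ∫ ω, q ^ (T (m - 1) ω) ∂μ
        = ∑ j ∈ Finset.Icc 1 m,
            (μ {ω | EYBP.TI U (Finset.range (m - 1)) ω = j}).toReal * q ^ j := by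
      have hfun : (fun ω => q ^ (T (m - 1) ω))
          = fun ω => q ^ (EYBP.TI U (Finset.range (m - 1)) ω) := by
        funext ω; rw [hTT]
      rw [hfun, EYBP.integral_pow_TI hUm q (m - 1), show m - 1 + 1 = m by omega]
    rw [hone, hInt]
  rw [Finset.sum_congr rfl (fun m hm => Finset.sum_congr rfl (hAval m hm))]
  -- collapse the inner constant sum
  have hconst : ∀ m ∈ Finset.Icc 1 s,
      (∑ _t ∈ Finset.range m, ((s.choose m : ℝ) * θ ^ m * (1 - θ) ^ (s - m))
          * (1 - ∫ ω, q ^ (T (m - 1) ω) ∂μ))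
        = (m : ℝ) * (((s.choose m : ℝ) * θ ^ m * (1 - θ) ^ (s - m))
            * (1 - ∫ ω, q ^ (T (m - 1) ω) ∂μ)) := by
    intro m _
    rw [Finset.sum_const, Finset.card_range, nsmul_eq_mul]
  rw [Finset.sum_congr rfl hconst]
  -- reindex m = 1 + k
  rw [← Finset.Ico_add_one_right_eq_Icc, Finset.sum_Ico_eq_sum_range]
  rw [show s + 1 - 1 = s from rfl]
  have hstep : ∀ k ∈ Finset.range s,
      ((1 + k : ℕ) : ℝ) * (((s.choose (1 + k) : ℝ)) * θ ^ (1 + k) * (1 - θ) ^ (s - (1 + k))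
          * (1 - ∫ ω, q ^ (T (1 + k - 1) ω) ∂μ))
        = (s : ℝ) * θ * (((s - 1).choose k : ℝ) * θ ^ k * (1 - θ) ^ (s - 1 - k)
            * (1 - ∫ ω, q ^ (T k ω) ∂μ)) := by
    intro k hk
    rw [Finset.mem_range] at hk
    have hch : ((1 + k : ℕ) : ℝ) * (s.choose (1 + k) : ℝ)
        = (s : ℝ) * ((s - 1).choose k : ℝ) := by
      have h := Nat.add_one_mul_choose_eq (s - 1) k
      rw [show s - 1 + 1 = s by omega] at h
      have h' := congrArg (fun x : ℕ => (x : ℝ)) h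
      push_cast at h'
      rw [show (1 : ℕ) + k = k + 1 by omega]
      push_cast
      linarith
    rw [show 1 + k - 1 = k by omega, show s - (1 + k) = s - 1 - k by omega,
      show θ ^ (1 + k) = θ * θ ^ k by rw [pow_add, pow_one]]
    calc ((1 + k : ℕ) : ℝ) * ((s.choose (1 + k) : ℝ) * (θ * θ ^ k) * (1 - θ) ^ (s - 1 - k)
          * (1 - ∫ ω, q ^ (T k ω) ∂μ))
        = (((1 + k : ℕ) : ℝ) * (s.choose (1 + k) : ℝ)) * (θ * θ ^ k) * (1 - θ) ^ (s - 1 - k)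
          * (1 - ∫ ω, q ^ (T k ω) ∂μ) := by ring
      _ = ((s : ℝ) * ((s - 1).choose k : ℝ)) * (θ * θ ^ k) * (1 - θ) ^ (s - 1 - k)
          * (1 - ∫ ω, q ^ (T k ω) ∂μ) := by rw [hch]
      _ = (s : ℝ) * θ * (((s - 1).choose k : ℝ) * θ ^ k * (1 - θ) ^ (s - 1 - k)
          * (1 - ∫ ω, q ^ (T k ω) ∂μ)) := by ring
  rw [Finset.sum_congr rfl hstep, ← Finset.mul_sum]
  have hbin : ∑ k ∈ Finset.range s,
      ((s - 1).choose k : ℝ) * θ ^ k * (1 - θ) ^ (s - 1 - k) = 1 := by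
    have h := add_pow θ (1 - θ) (s - 1)
    rw [show θ + (1 - θ) = 1 by ring, one_pow, show s - 1 + 1 = s by omega] at h
    calc ∑ k ∈ Finset.range s, ((s - 1).choose k : ℝ) * θ ^ k * (1 - θ) ^ (s - 1 - k)
        = ∑ k ∈ Finset.range s, θ ^ k * (1 - θ) ^ (s - 1 - k) * ((s - 1).choose k : ℝ) := by
          apply Finset.sum_congr rfl
          intro k _
          ring
      _ = 1 := h.symm
  have hfinal : ∑ k ∈ Finset.range s,
      ((s - 1).choose k : ℝ) * θ ^ k * (1 - θ) ^ (s - 1 - k)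
        * (1 - ∫ ω, q ^ (T k ω) ∂μ)
      = 1 - ∑ k ∈ Finset.range s,
          ((s - 1).choose k : ℝ) * θ ^ k * (1 - θ) ^ (s - 1 - k)
            * ∫ ω, q ^ (T k ω) ∂μ := by
    have hsplit2 : ∑ k ∈ Finset.range s,
        ((s - 1).choose k : ℝ) * θ ^ k * (1 - θ) ^ (s - 1 - k)
          * (1 - ∫ ω, q ^ (T k ω) ∂μ)
        = ∑ k ∈ Finset.range s,
            (((s - 1).choose k : ℝ) * θ ^ k * (1 - θ) ^ (s - 1 - k)
              - ((s - 1).choose k : ℝ) * θ ^ k * (1 - θ) ^ (s - 1 - k)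
                * ∫ ω, q ^ (T k ω) ∂μ) := by
      apply Finset.sum_congr rfl
      intro k _
      ring
    rw [hsplit2, Finset.sum_sub_distrib, hbin]
  rw [hfinal]
end
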